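/- arXiv:1310.0947 — 8 statements merged into one kernel-verified Lean document; each statement's English description precedes it below -/
import Mathlib

section
/- Let f : [a,b] → ℝ be a mapping such that the (n−1)-th derivative f^(n−1) (n ≥ 1) is absolutely continuous on [a,b]. Then for any x ∈ [a,b] one has the identity: ∫_a^b f(t) dt = Σ_{k=0}^{n−1} (1/(k+1)!) [ (x−a)^{k+1} f^(k)(a) + (−1)^k (b−x)^{k+1} f^(k)(b) ] + (1/n!) ∫_a^b (x−t)^n f^(n)(t) dt. -/
open MeasureTheory Set

lemma ibp_aux (g G : ℝ → ℝ) (a b x : ℝ) (hab : a ≤ b) (m : ℕ)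
    (hg : ∀ t ∈ Icc a b, HasDerivAt G (g t) t)
    (hgi : IntervalIntegrable g volume a b) :
    ∫ t in a..b, (x - t) ^ (m + 1) * g t =
      (x - b) ^ (m + 1) * G b - (x - a) ^ (m + 1) * G a +
        ((m : ℝ) + 1) * ∫ t in a..b, (x - t) ^ m * G t := by
  have huIcc : uIcc a b = Icc a b := uIcc_of_le hab
  have hu : ∀ t ∈ uIcc a b, HasDerivAt (fun s => (x - s) ^ (m + 1))
      ((((m : ℝ) + 1) * (x - t) ^ m) * (-1)) t := by
    intro t _
    have h : HasDerivAt (fun s : ℝ => x - s) (-1) t := by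
      simpa using (hasDerivAt_id t).const_sub x
    have := h.fun_pow (m + 1)
    simpa [Nat.cast_add] using this
  have hv : ∀ t ∈ uIcc a b, HasDerivAt G (g t) t := fun t ht => hg t (huIcc ▸ ht)
  have hu' : IntervalIntegrable (fun t => (((m : ℝ) + 1) * (x - t) ^ m) * (-1)) volume a b :=
    (Continuous.intervalIntegrable (by continuity) a b)
  have h := intervalIntegral.integral_mul_deriv_eq_deriv_mul hu hv hu' hgi
  rw [h]
  have h2 : ∫ t in a..b, ((((m : ℝ) + 1) * (x - t) ^ m) * (-1)) * G t
      = -(((m : ℝ) + 1) * ∫ t in a..b, (x - t) ^ m * G t) := by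
    rw [← intervalIntegral.integral_const_mul, ← intervalIntegral.integral_neg]
    apply intervalIntegral.integral_congr
    intro t _; ring
  rw [h2]; ring


/-- **Lemma (Barnett–Dragomir).** If `f^(n-1)` (`n ≥ 1`) is absolutely continuous on `[a, b]`
(formalized: each iterated derivative of order `k < n` has the `(k+1)`-st iterated derivative
as its derivative on `[a, b]`, and the `n`-th iterated derivative is integrable on `[a, b]`),
then for any `x ∈ [a, b]`,
`∫_a^b f = ∑_{k=0}^{n-1} (1/(k+1)!) [(x-a)^{k+1} f^(k)(a) + (-1)^k (b-x)^{k+1} f^(k)(b)]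
  + (1/n!) ∫_a^b (x-t)^n f^(n)(t) dt`. -/
theorem integral_eq_sum_add_integral_pow_mul_iteratedDeriv
    (f : ℝ → ℝ) (a b : ℝ) (hab : a < b) (n : ℕ) (hn : 1 ≤ n)
    (hderiv : ∀ k < n, ∀ t ∈ Icc a b,
      HasDerivAt (iteratedDeriv k f) (iteratedDeriv (k + 1) f t) t)
    (hint : IntervalIntegrable (iteratedDeriv n f) volume a b)
    (x : ℝ) (hx : x ∈ Icc a b) :
    ∫ t in a..b, f t =
      (∑ k ∈ Finset.range n, (1 / (Nat.factorial (k + 1) : ℝ)) *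
        ((x - a) ^ (k + 1) * iteratedDeriv k f a +
          (-1 : ℝ) ^ k * (b - x) ^ (k + 1) * iteratedDeriv k f b)) +
      (1 / (Nat.factorial n : ℝ)) * ∫ t in a..b, (x - t) ^ n * iteratedDeriv n f t := by
  have hab' : a ≤ b := hab.le
  have huIcc : uIcc a b = Icc a b := uIcc_of_le hab'
  induction n, hn using Nat.le_induction with
  | base =>
    have hg : ∀ t ∈ Icc a b, HasDerivAt f (iteratedDeriv 1 f t) t := by
      intro t ht
      simpa [iteratedDeriv_zero] using hderiv 0 (by norm_num) t ht
    have h := ibp_aux (iteratedDeriv 1 f) f a b x hab' 0 hg hint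
    simp only [zero_add, pow_one, pow_zero, Nat.cast_zero, one_mul, iteratedDeriv_one] at h
    simp only [Finset.sum_range_one, pow_one, pow_zero, iteratedDeriv_zero, iteratedDeriv_one, Nat.factorial]
    norm_num
    have e1 : (x - b) * f b = -((b - x) * f b) := by ring
    have e2 : x - a + (b - x) = b - a := by ring
    linarith
  | succ n hn ih =>
    -- continuity of iteratedDeriv n f on [a,b]
    have hcont : ContinuousOn (iteratedDeriv n f) (Icc a b) := fun t ht =>
      (hderiv n (by omega) t ht).continuousAt.continuousWithinAt
    have hint_n : IntervalIntegrable (iteratedDeriv n f) volume a b :=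
      (hcont.mono (by rw [huIcc])).intervalIntegrable
    have ihh := ih (fun k hk => hderiv k (by omega)) hint_n
    have h := ibp_aux (iteratedDeriv (n + 1) f) (iteratedDeriv n f) a b x hab' n
      (hderiv n (by omega)) hint
    -- h : ∫ (x-t)^(n+1) f^(n+1) = (x-b)^(n+1) f^(n) b - (x-a)^(n+1) f^(n) a + (n+1) ∫ (x-t)^n f^(n)
    have hkey : ∫ t in a..b, (x - t) ^ n * iteratedDeriv n f t =
        ((∫ t in a..b, (x - t) ^ (n + 1) * iteratedDeriv (n + 1) f t)
          - (x - b) ^ (n + 1) * iteratedDeriv n f b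
          + (x - a) ^ (n + 1) * iteratedDeriv n f a) / ((n : ℝ) + 1) := by
      field_simp [h]; linarith [h]
    rw [ihh, hkey, Finset.sum_range_succ]
    have hfact : (Nat.factorial (n + 1) : ℝ) = (Nat.factorial n : ℝ) * ((n : ℝ) + 1) := by
      push_cast [Nat.factorial_succ]; ring
    have hne : (Nat.factorial n : ℝ) ≠ 0 := by positivity
    have hne2 : (n : ℝ) + 1 ≠ 0 := by positivity
    have hneg : (x - b) ^ (n + 1) = -((-1 : ℝ) ^ n * (b - x) ^ (n + 1)) := by
      have : (x - b) = -(b - x) := by ring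
      rw [this, neg_pow]; ring
    rw [hneg, hfact]
    field_simp
    ring
end

section
/- Let f : [a,b] → ℝ be a mapping such that the (n−1)-th derivative f^(n−1) (n ≥ 1) is absolutely continuous on [a,b]. If |f^(n)| is convex on [a,b], then for all x ∈ [a,b]: | ∫_a^b f(t) dt − Σ_{k=0}^{n−1} (1/(k+1)!) [ (x−a)^{k+1} f^(k)(a) + (−1)^k (b−x)^{k+1} f^(k)(b) ] | ≤ (1/(n!(b−a))) { |f^(n)(a)| [ (b−x)(x−a)^{n+1}/(n+1) + (b−x)^{n+2}/((n+1)(n+2)) + (x−a)^{n+2}/(n+2) ] + |f^(n)(b)| [ (b−x)^{n+1}(x−a)/(n+1) + (x−a)^{n+2}/((n+1)(n+2)) + (b−x)^{n+2}/(n+2) ] }. -/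
open MeasureTheory Set intervalIntegral

private lemma int_pow_left (m : ℕ) (a x : ℝ) :
    ∫ t in a..x, (x - t) ^ m = (x - a) ^ (m + 1) / (m + 1) := by
  have := intervalIntegral.integral_comp_sub_left (a := a) (b := x) (fun u => u ^ m) x
  simp only [sub_self] at this
  rw [this, integral_pow]; simp

private lemma int_pow_right (m : ℕ) (x b : ℝ) :
    ∫ t in x..b, (t - x) ^ m = (b - x) ^ (m + 1) / (m + 1) := by
  have := intervalIntegral.integral_comp_sub_right (a := x) (b := b) (fun u => u ^ m) x
  simp only [sub_self] at this
  rw [this, integral_pow]; simp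

private lemma kernel_int (a b x : ℝ) (hab : a ≤ b) (hx : x ∈ Icc a b) (n : ℕ) (A B : ℝ) :
    ∫ t in a..b, |x - t| ^ n * ((b - t) * A + (t - a) * B) =
      A * ((b - x) * (x - a) ^ (n + 1) / ((n : ℝ) + 1) +
            (b - x) ^ (n + 2) / (((n : ℝ) + 1) * ((n : ℝ) + 2)) +
            (x - a) ^ (n + 2) / ((n : ℝ) + 2)) +
        B * ((b - x) ^ (n + 1) * (x - a) / ((n : ℝ) + 1) +
            (x - a) ^ (n + 2) / (((n : ℝ) + 1) * ((n : ℝ) + 2)) +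
            (b - x) ^ (n + 2) / ((n : ℝ) + 2)) := by
  obtain ⟨hax, hxb⟩ := hx
  have hc : Continuous fun t : ℝ => |x - t| ^ n * ((b - t) * A + (t - a) * B) := by fun_prop
  have hsplit : (∫ t in a..x, |x - t| ^ n * ((b - t) * A + (t - a) * B)) +
      (∫ t in x..b, |x - t| ^ n * ((b - t) * A + (t - a) * B)) =
      ∫ t in a..b, |x - t| ^ n * ((b - t) * A + (t - a) * B) :=
    integral_add_adjacent_intervals (hc.intervalIntegrable _ _) (hc.intervalIntegrable _ _)
  have hL : (∫ t in a..x, |x - t| ^ n * ((b - t) * A + (t - a) * B)) =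
      (A * (b - x) + B * (x - a)) * ((x - a) ^ (n+1) / ((n:ℝ)+1)) +
        (A - B) * ((x - a) ^ (n+2) / ((n:ℝ)+2)) := by
    have h1 : (∫ t in a..x, |x - t| ^ n * ((b - t) * A + (t - a) * B)) =
        ∫ t in a..x, ((A * (b - x) + B * (x - a)) * (x - t) ^ n + (A - B) * (x - t) ^ (n+1)) := by
      apply integral_congr
      intro t ht
      dsimp only
      rw [uIcc_of_le hax] at ht
      rw [abs_of_nonneg (by linarith [ht.2] : (0:ℝ) ≤ x - t)]
      ring
    rw [h1, integral_add ((Continuous.intervalIntegrable (by fun_prop) _ _ :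
          IntervalIntegrable (fun t : ℝ => (A * (b - x) + B * (x - a)) * (x - t) ^ n) volume a x))
        ((Continuous.intervalIntegrable (by fun_prop) _ _ :
          IntervalIntegrable (fun t : ℝ => (A - B) * (x - t) ^ (n+1)) volume a x)),
      intervalIntegral.integral_const_mul, intervalIntegral.integral_const_mul, int_pow_left, int_pow_left]
    push_cast; ring
  have hR : (∫ t in x..b, |x - t| ^ n * ((b - t) * A + (t - a) * B)) =
      (A * (b - x) + B * (x - a)) * ((b - x) ^ (n+1) / ((n:ℝ)+1)) +
        (B - A) * ((b - x) ^ (n+2) / ((n:ℝ)+2)) := by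
    have h1 : (∫ t in x..b, |x - t| ^ n * ((b - t) * A + (t - a) * B)) =
        ∫ t in x..b, ((A * (b - x) + B * (x - a)) * (t - x) ^ n + (B - A) * (t - x) ^ (n+1)) := by
      apply integral_congr
      intro t ht
      dsimp only
      rw [uIcc_of_le hxb] at ht
      rw [abs_of_nonpos (by linarith [ht.1] : x - t ≤ 0), neg_sub]
      ring
    rw [h1, integral_add ((Continuous.intervalIntegrable (by fun_prop) _ _ :
          IntervalIntegrable (fun t : ℝ => (A * (b - x) + B * (x - a)) * (t - x) ^ n) volume x b))
        ((Continuous.intervalIntegrable (by fun_prop) _ _ :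
          IntervalIntegrable (fun t : ℝ => (B - A) * (t - x) ^ (n+1)) volume x b)),
      intervalIntegral.integral_const_mul, intervalIntegral.integral_const_mul, int_pow_right, int_pow_right]
    push_cast; ring
  rw [← hsplit, hL, hR]
  have h1 : (n:ℝ) + 1 ≠ 0 := by positivity
  have h2 : (n:ℝ) + 2 ≠ 0 := by positivity
  field_simp
  ring

private lemma key_identity (f : ℝ → ℝ) (a b x : ℝ) (hab : a ≤ b) (n : ℕ)
    (hderiv : ∀ k < n, ∀ t ∈ Icc a b,
      HasDerivAt (iteratedDeriv k f) (iteratedDeriv (k + 1) f t) t)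
    (hint : ∀ k ≤ n, IntervalIntegrable (iteratedDeriv k f) volume a b) :
    (∫ t in a..b, f t) -
      ∑ k ∈ Finset.range n, (1 / (Nat.factorial (k + 1) : ℝ)) *
        ((x - a) ^ (k + 1) * iteratedDeriv k f a +
          (-1 : ℝ) ^ k * (b - x) ^ (k + 1) * iteratedDeriv k f b)
    = ∫ t in a..b, (x - t) ^ n / (Nat.factorial n : ℝ) * iteratedDeriv n f t := by
  induction n with
  | zero =>
    simp [iteratedDeriv_zero]
  | succ m ih =>
    have ihm := ih (fun k hk => hderiv k (Nat.lt_succ_of_lt hk))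
      (fun k hk => hint k (Nat.le_succ_of_le hk))
    rw [Finset.sum_range_succ, sub_add_eq_sub_sub, ihm]
    set v := iteratedDeriv m f with hv
    set v' := iteratedDeriv (m + 1) f with hv'
    have hfact : ((m + 1).factorial : ℝ) = ((m : ℝ) + 1) * (m.factorial : ℝ) := by
      rw [Nat.factorial_succ]; push_cast; ring
    have hmfac : (m.factorial : ℝ) ≠ 0 := Nat.cast_ne_zero.2 m.factorial_ne_zero
    have hu : ∀ t ∈ uIcc a b, HasDerivAt
        (fun t => -((x - t) ^ (m + 1) / ((m + 1).factorial : ℝ)))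
        ((x - t) ^ m / (m.factorial : ℝ)) t := by
      intro t _
      have h1 : HasDerivAt (fun t : ℝ => x - t) (-1) t := by
        simpa using (hasDerivAt_id t).const_sub x
      have h2 := (h1.pow (m + 1)).div_const ((m + 1).factorial : ℝ)
      have h3 := h2.neg
      refine HasDerivAt.congr_deriv (f := fun t => -((x - t) ^ (m + 1) / ((m + 1).factorial : ℝ))) h3 ?_
      rw [hfact]
      simp only [Nat.add_sub_cancel, Nat.cast_succ]
      field_simp
    have hvd : ∀ t ∈ uIcc a b, HasDerivAt v (v' t) t := by
      intro t ht
      exact hderiv m (Nat.lt_succ_self m) t (by rwa [uIcc_of_le hab] at ht)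
    have hu'int : IntervalIntegrable (fun t => (x - t) ^ m / (m.factorial : ℝ)) volume a b :=
      (Continuous.intervalIntegrable (by fun_prop) _ _)
    have hv'int : IntervalIntegrable v' volume a b := hint (m + 1) le_rfl
    have parts := integral_mul_deriv_eq_deriv_mul hu hvd hu'int hv'int
    have hflip : (∫ t in a..b, (x - t) ^ (m + 1) / ((m + 1).factorial : ℝ) * v' t)
        = -∫ t in a..b, -((x - t) ^ (m + 1) / ((m + 1).factorial : ℝ)) * v' t := by
      rw [← intervalIntegral.integral_neg]
      congr 1; funext t; ring
    rw [hflip, parts]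
    have hxb : (-((x - b) ^ (m + 1) / ((m + 1).factorial : ℝ))) =
        (-1 : ℝ) ^ m * (b - x) ^ (m + 1) / ((m + 1).factorial : ℝ) := by
      rw [show x - b = -(b - x) by ring, neg_pow]
      rw [pow_succ]
      field_simp
    rw [hxb]
    field_simp
    ring

/-- **Theorem.** If `f^(n-1)` (`n ≥ 1`) is absolutely continuous on `[a, b]` and `|f^(n)|` is
convex on `[a, b]`, then for all `x ∈ [a, b]` the stated bound for
`|∫_a^b f - ∑_{k=0}^{n-1} (1/(k+1)!) [(x-a)^{k+1} f^(k)(a) + (-1)^k (b-x)^{k+1} f^(k)(b)]|`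
holds. -/
theorem abs_integral_sub_sum_le_of_convexOn_abs_iteratedDeriv
    (f : ℝ → ℝ) (a b : ℝ) (hab : a < b) (n : ℕ) (hn : 1 ≤ n)
    (hderiv : ∀ k < n, ∀ t ∈ Icc a b,
      HasDerivAt (iteratedDeriv k f) (iteratedDeriv (k + 1) f t) t)
    (hint : IntervalIntegrable (iteratedDeriv n f) volume a b)
    (hconv : ConvexOn ℝ (Icc a b) (fun t => |iteratedDeriv n f t|))
    (x : ℝ) (hx : x ∈ Icc a b) :
    |(∫ t in a..b, f t) -
      ∑ k ∈ Finset.range n, (1 / (Nat.factorial (k + 1) : ℝ)) *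
        ((x - a) ^ (k + 1) * iteratedDeriv k f a +
          (-1 : ℝ) ^ k * (b - x) ^ (k + 1) * iteratedDeriv k f b)| ≤
      (1 / ((Nat.factorial n : ℝ) * (b - a))) *
        (|iteratedDeriv n f a| *
          ((b - x) * (x - a) ^ (n + 1) / ((n : ℝ) + 1) +
            (b - x) ^ (n + 2) / (((n : ℝ) + 1) * ((n : ℝ) + 2)) +
            (x - a) ^ (n + 2) / ((n : ℝ) + 2)) +
        |iteratedDeriv n f b| *
          ((b - x) ^ (n + 1) * (x - a) / ((n : ℝ) + 1) +
            (x - a) ^ (n + 2) / (((n : ℝ) + 1) * ((n : ℝ) + 2)) +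
            (b - x) ^ (n + 2) / ((n : ℝ) + 2))) := by
  obtain ⟨hax, hxb⟩ := hx
  have hba : (0:ℝ) < b - a := by linarith
  set A := |iteratedDeriv n f a| with hA
  set B := |iteratedDeriv n f b| with hB
  have hintk : ∀ k ≤ n, IntervalIntegrable (iteratedDeriv k f) volume a b := by
    intro k hk
    rcases eq_or_lt_of_le hk with rfl | hlt
    · exact hint
    · have hco : ContinuousOn (iteratedDeriv k f) (Icc a b) := fun t ht =>
        (hderiv k hlt t ht).continuousAt.continuousWithinAt
      exact ContinuousOn.intervalIntegrable (by rwa [uIcc_of_le hab.le])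
  rw [key_identity f a b x hab.le n hderiv hintk]
  have hKint : IntervalIntegrable
      (fun t => (x - t) ^ n / (Nat.factorial n : ℝ) * iteratedDeriv n f t) volume a b :=
    hint.continuousOn_mul (by fun_prop)
  have hfacpos : (0:ℝ) < (Nat.factorial n : ℝ) := by positivity
  have hpt : ∀ t ∈ Icc a b, |(x - t) ^ n / (Nat.factorial n : ℝ) * iteratedDeriv n f t| ≤
      (1 / ((Nat.factorial n : ℝ) * (b - a))) * (|x - t| ^ n * ((b - t) * A + (t - a) * B)) := by
    intro t ht
    have h1 : |(x - t) ^ n / (Nat.factorial n : ℝ) * iteratedDeriv n f t| =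
        |x - t| ^ n / (Nat.factorial n : ℝ) * |iteratedDeriv n f t| := by
      rw [abs_mul, abs_div, abs_pow, Nat.abs_cast]
    have hw1 : (0:ℝ) ≤ (b - t) / (b - a) := div_nonneg (by linarith [ht.2]) hba.le
    have hw2 : (0:ℝ) ≤ (t - a) / (b - a) := div_nonneg (by linarith [ht.1]) hba.le
    have hsum : (b - t) / (b - a) + (t - a) / (b - a) = 1 := by field_simp; ring
    have hcv := hconv.2 (show a ∈ Icc a b from ⟨le_refl a, hab.le⟩)
      (show b ∈ Icc a b from ⟨hab.le, le_refl b⟩) hw1 hw2 hsum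
    have hptv : ((b - t) / (b - a)) • a + ((t - a) / (b - a)) • b = t := by
      rw [smul_eq_mul, smul_eq_mul]; field_simp; ring
    rw [hptv] at hcv
    simp only [smul_eq_mul] at hcv
    have h2 : |iteratedDeriv n f t| ≤ ((b - t) * A + (t - a) * B) / (b - a) := by
      calc |iteratedDeriv n f t| ≤ (b - t) / (b - a) * A + (t - a) / (b - a) * B := hcv
        _ = ((b - t) * A + (t - a) * B) / (b - a) := by ring
    rw [h1]
    calc |x - t| ^ n / (Nat.factorial n : ℝ) * |iteratedDeriv n f t|
        ≤ |x - t| ^ n / (Nat.factorial n : ℝ) * (((b - t) * A + (t - a) * B) / (b - a)) :=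
          mul_le_mul_of_nonneg_left h2 (by positivity)
      _ = (1 / ((Nat.factorial n : ℝ) * (b - a))) * (|x - t| ^ n * ((b - t) * A + (t - a) * B)) := by
          field_simp
  calc |∫ t in a..b, (x - t) ^ n / (Nat.factorial n : ℝ) * iteratedDeriv n f t|
      ≤ ∫ t in a..b, |(x - t) ^ n / (Nat.factorial n : ℝ) * iteratedDeriv n f t| :=
        intervalIntegral.abs_integral_le_integral_abs hab.le
    _ ≤ ∫ t in a..b, (1 / ((Nat.factorial n : ℝ) * (b - a))) *
          (|x - t| ^ n * ((b - t) * A + (t - a) * B)) :=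
        intervalIntegral.integral_mono_on hab.le hKint.abs
          (Continuous.intervalIntegrable (by fun_prop) _ _) hpt
    _ = (1 / ((Nat.factorial n : ℝ) * (b - a))) *
          ∫ t in a..b, |x - t| ^ n * ((b - t) * A + (t - a) * B) := integral_const_mul _ _
    _ = _ := by rw [kernel_int a b x hab.le ⟨hax, hxb⟩ n A B]
end

section
/- Let f : [a,b] → ℝ be a mapping such that the (n−1)-th derivative f^(n−1) (n ≥ 1) is absolutely continuous on [a,b]. If |f^(n)| is convex on [a,b], then: | ∫_a^b f(t) dt − Σ_{k=0}^{n−1} (1/(k+1)!) ((b−a)/2)^{k+1} [ f^(k)(a) + (−1)^k f^(k)(b) ] | ≤ ((b−a)^{n+1} / (2^{n+1} (n+1)!)) [ |f^(n)(a)| + |f^(n)(b)| ]. -/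
open MeasureTheory Set intervalIntegral

private lemma aux_kernel_int (a b : ℝ) (hab : a ≤ b) (n : ℕ) :
    ∫ t in a..b, |t - (a + b) / 2| ^ n
      = 2 * ((b - a) / 2) ^ (n + 1) / (n + 1) := by
  set x := (a + b) / 2 with hx
  have hax : a ≤ x := by rw [hx]; linarith
  have hxb : x ≤ b := by rw [hx]; linarith
  have hc : Continuous fun t : ℝ => |t - x| ^ n := by fun_prop
  have h1 : (∫ t in a..x, |t - x| ^ n) = (x - a) ^ (n + 1) / (n + 1) := by
    have he : (∫ t in a..x, |t - x| ^ n) = ∫ t in a..x, (x - t) ^ n := by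
      apply integral_congr
      intro t ht
      rw [uIcc_of_le hax] at ht
      dsimp only
      rw [abs_of_nonpos (by linarith [ht.2])]
      ring_nf
    rw [he, integral_comp_sub_left (fun s => s ^ n) x, sub_self, integral_pow]
    rw [zero_pow (by omega)]
    ring
  have h2 : (∫ t in x..b, |t - x| ^ n) = (b - x) ^ (n + 1) / (n + 1) := by
    have he : (∫ t in x..b, |t - x| ^ n) = ∫ t in x..b, (t - x) ^ n := by
      apply integral_congr
      intro t ht
      rw [uIcc_of_le hxb] at ht
      dsimp only
      rw [abs_of_nonneg (by linarith [ht.1])]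
    rw [he, integral_comp_sub_right (fun s => s ^ n) x, sub_self, integral_pow]
    rw [zero_pow (by omega)]
    ring
  have hsplit := integral_add_adjacent_intervals (μ := volume)
    (hc.intervalIntegrable a x) (hc.intervalIntegrable x b)
  rw [← hsplit, h1, h2]
  have hxa : x - a = (b - a) / 2 := by rw [hx]; ring
  have hbx : b - x = (b - a) / 2 := by rw [hx]; ring
  rw [hxa, hbx]
  ring

private lemma aux_sym (a b : ℝ) (n : ℕ) :
    (∫ t in a..b, |t - (a + b) / 2| ^ n * (b - t))
      = ∫ t in a..b, |t - (a + b) / 2| ^ n * (t - a) := by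
  set x := (a + b) / 2 with hx
  have h := integral_comp_sub_left (fun s => |s - x| ^ n * (s - a)) (a + b)
    (a := a) (b := b)
  have h2 : (a + b) - b = a := by ring
  have h3 : (a + b) - a = b := by ring
  rw [h2, h3] at h
  rw [← h]
  apply integral_congr
  intro t _
  dsimp only
  have : a + b - t - x = -(t - x) := by rw [hx]; ring
  rw [this, abs_neg]
  ring_nf

private lemma aux_key_id (f : ℝ → ℝ) (a b : ℝ) : ∀ m : ℕ,
    (∀ k < m, ∀ t ∈ Set.uIcc a b,
      HasDerivAt (iteratedDeriv k f) (iteratedDeriv (k + 1) f t) t) →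
    IntervalIntegrable (iteratedDeriv m f) volume a b →
    (∫ t in a..b, f t) -
      ∑ k ∈ Finset.range m, (1 / (Nat.factorial (k + 1) : ℝ)) * ((b - a) / 2) ^ (k + 1) *
        (iteratedDeriv k f a + (-1 : ℝ) ^ k * iteratedDeriv k f b)
      = (-1 : ℝ) ^ m *
          ∫ t in a..b, (t - (a + b) / 2) ^ m / (Nat.factorial m : ℝ) * iteratedDeriv m f t := by
  intro m
  induction m with
  | zero =>
    intro _ _
    simp [iteratedDeriv_zero]
  | succ m ih =>
    intro hd hi
    set x := (a + b) / 2 with hx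
    have hdm : ∀ t ∈ Set.uIcc a b,
        HasDerivAt (iteratedDeriv m f) (iteratedDeriv (m + 1) f t) t :=
      hd m (Nat.lt_succ_self m)
    have hcontm : ContinuousOn (iteratedDeriv m f) (Set.uIcc a b) :=
      fun t ht => (hdm t ht).continuousAt.continuousWithinAt
    have him : IntervalIntegrable (iteratedDeriv m f) volume a b :=
      hcontm.intervalIntegrable
    have IH := ih (fun k hk => hd k (Nat.lt_succ_of_lt hk)) him
    have hfac : ((m + 1).factorial : ℝ) ≠ 0 := Nat.cast_ne_zero.mpr (Nat.factorial_ne_zero _)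
    have hfacm : ((m).factorial : ℝ) ≠ 0 := Nat.cast_ne_zero.mpr (Nat.factorial_ne_zero _)
    have hu : ∀ t ∈ Set.uIcc a b,
        HasDerivAt (fun t => (t - x) ^ (m + 1) / ((m + 1).factorial : ℝ))
          ((t - x) ^ m / (m.factorial : ℝ)) t := by
      intro t _
      have h1 : HasDerivAt (fun t : ℝ => (t - x) ^ (m + 1))
          (((m : ℝ) + 1) * (t - x) ^ m) t := by
        have := ((hasDerivAt_pow (m + 1) (t - x)).comp t
          ((hasDerivAt_id t).sub_const x))
        simpa [Function.comp_def] using this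
      have h2 := h1.div_const ((m + 1).factorial : ℝ)
      refine h2.congr_deriv ?_
      rw [Nat.factorial_succ]
      push_cast
      field_simp
    have hu'int : IntervalIntegrable (fun t => (t - x) ^ m / (m.factorial : ℝ))
        volume a b := (Continuous.intervalIntegrable (by fun_prop) a b)
    have parts := integral_mul_deriv_eq_deriv_mul hu hdm hu'int hi
    rw [Finset.sum_range_succ, ← sub_sub, IH, parts]
    have hbx : b - x = (b - a) / 2 := by rw [hx]; ring
    have hax : a - x = -((b - a) / 2) := by rw [hx]; ring
    rw [hbx, hax]
    have hneg : (-((b - a) / 2) : ℝ) ^ (m + 1) = -((-1 : ℝ) ^ m * ((b - a) / 2) ^ (m + 1)) := by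
      rw [neg_pow, pow_succ]
      ring
    rw [hneg, Nat.factorial_succ]
    push_cast
    have hs : (-1 : ℝ) ^ m * (-1 : ℝ) ^ m = 1 := by
      rw [← pow_add]
      exact Even.neg_one_pow ⟨m, rfl⟩
    linear_combination (((b - a) / 2) ^ (m + 1) / (((m : ℝ) + 1) * (m.factorial : ℝ)) *
      iteratedDeriv m f a) * hs

/-- **Corollary (midpoint case `x = (a+b)/2`).** If `f^(n-1)` (`n ≥ 1`) is absolutely continuous
on `[a, b]` and `|f^(n)|` is convex on `[a, b]`, then
`|∫_a^b f - ∑_{k=0}^{n-1} (1/(k+1)!) ((b-a)/2)^{k+1} [f^(k)(a) + (-1)^k f^(k)(b)]|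
  ≤ ((b-a)^{n+1} / (2^{n+1} (n+1)!)) (|f^(n)(a)| + |f^(n)(b)|)`. -/
theorem abs_integral_sub_sum_midpoint_le_of_convexOn_abs_iteratedDeriv
    (f : ℝ → ℝ) (a b : ℝ) (hab : a < b) (n : ℕ) (hn : 1 ≤ n)
    (hderiv : ∀ k < n, ∀ t ∈ Icc a b,
      HasDerivAt (iteratedDeriv k f) (iteratedDeriv (k + 1) f t) t)
    (hint : IntervalIntegrable (iteratedDeriv n f) volume a b)
    (hconv : ConvexOn ℝ (Icc a b) (fun t => |iteratedDeriv n f t|)) :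
    |(∫ t in a..b, f t) -
      ∑ k ∈ Finset.range n, (1 / (Nat.factorial (k + 1) : ℝ)) * ((b - a) / 2) ^ (k + 1) *
        (iteratedDeriv k f a + (-1 : ℝ) ^ k * iteratedDeriv k f b)| ≤
      ((b - a) ^ (n + 1) / (2 ^ (n + 1) * (Nat.factorial (n + 1) : ℝ))) *
        (|iteratedDeriv n f a| + |iteratedDeriv n f b|) := by
  set x := (a + b) / 2 with hx
  have hba : (0 : ℝ) < b - a := by linarith
  have hfac : ((n).factorial : ℝ) ≠ 0 := Nat.cast_ne_zero.mpr (Nat.factorial_ne_zero _)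
  have hfacpos : (0 : ℝ) < (n.factorial : ℝ) := by positivity
  set A := |iteratedDeriv n f a| with hA
  set B := |iteratedDeriv n f b| with hB
  have huI : Set.uIcc a b = Icc a b := uIcc_of_le hab.le
  have hid := aux_key_id f a b n (fun k hk t ht => hderiv k hk t (huI ▸ ht)) hint
  rw [hid, abs_mul, abs_pow, abs_neg, abs_one, one_pow, one_mul]
  -- pointwise bound function
  set φ : ℝ → ℝ := fun t => (A / ((n.factorial : ℝ) * (b - a))) * (|t - x| ^ n * (b - t))
      + (B / ((n.factorial : ℝ) * (b - a))) * (|t - x| ^ n * (t - a)) with hφ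
  have hφcont : Continuous φ := by fun_prop
  have hintabs : IntervalIntegrable
      (fun t => |(t - x) ^ n / (n.factorial : ℝ) * iteratedDeriv n f t|) volume a b := by
    exact (hint.continuousOn_mul (by fun_prop)).abs
  have step1 : |∫ t in a..b, (t - x) ^ n / (n.factorial : ℝ) * iteratedDeriv n f t|
      ≤ ∫ t in a..b, |(t - x) ^ n / (n.factorial : ℝ) * iteratedDeriv n f t| :=
    abs_integral_le_integral_abs hab.le
  have step2 : (∫ t in a..b, |(t - x) ^ n / (n.factorial : ℝ) * iteratedDeriv n f t|)
      ≤ ∫ t in a..b, φ t := by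
    apply integral_mono_on hab.le hintabs (hφcont.intervalIntegrable a b)
    intro t ht
    have hta : 0 ≤ t - a := by linarith [ht.1]
    have hbt : 0 ≤ b - t := by linarith [ht.2]
    have hconvt : |iteratedDeriv n f t|
        ≤ ((b - t) / (b - a)) * A + ((t - a) / (b - a)) * B := by
      have h1 : (0 : ℝ) ≤ (b - t) / (b - a) := div_nonneg hbt hba.le
      have h2 : (0 : ℝ) ≤ (t - a) / (b - a) := div_nonneg hta hba.le
      have h3 : (b - t) / (b - a) + (t - a) / (b - a) = 1 := by
        field_simp
        ring
      have h4 := hconv.2 (Set.left_mem_Icc.mpr hab.le) (Set.right_mem_Icc.mpr hab.le)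
        h1 h2 h3
      simp only [smul_eq_mul] at h4
      have heq : (b - t) / (b - a) * a + (t - a) / (b - a) * b = t := by
        field_simp
        ring
      rw [heq] at h4
      exact h4
    rw [abs_mul, abs_div, abs_pow, Nat.abs_cast]
    have hkpos : 0 ≤ |t - x| ^ n / (n.factorial : ℝ) := by positivity
    calc |t - x| ^ n / (n.factorial : ℝ) * |iteratedDeriv n f t|
        ≤ |t - x| ^ n / (n.factorial : ℝ) *
            (((b - t) / (b - a)) * A + ((t - a) / (b - a)) * B) :=
          mul_le_mul_of_nonneg_left hconvt hkpos
      _ = φ t := by rw [hφ]; field_simp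
  -- compute ∫ φ
  have hCcont : Continuous fun t : ℝ => |t - x| ^ n * (b - t) := by fun_prop
  have hDcont : Continuous fun t : ℝ => |t - x| ^ n * (t - a) := by fun_prop
  have hCD : (∫ t in a..b, |t - x| ^ n * (b - t))
      = ∫ t in a..b, |t - x| ^ n * (t - a) := aux_sym a b n
  have hsum : (∫ t in a..b, |t - x| ^ n * (b - t)) + ∫ t in a..b, |t - x| ^ n * (t - a)
      = (b - a) * (2 * ((b - a) / 2) ^ (n + 1) / (n + 1)) := by
    rw [← integral_add (hCcont.intervalIntegrable a b) (hDcont.intervalIntegrable a b)]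
    rw [← aux_kernel_int a b hab.le n, ← intervalIntegral.integral_const_mul]
    apply integral_congr
    intro t _
    dsimp only
    ring
  have hDval : (∫ t in a..b, |t - x| ^ n * (t - a))
      = (b - a) * ((b - a) / 2) ^ (n + 1) / (n + 1) := by
    rw [hCD] at hsum
    linear_combination hsum / 2
  have hCval : (∫ t in a..b, |t - x| ^ n * (b - t))
      = (b - a) * ((b - a) / 2) ^ (n + 1) / (n + 1) := by rw [hCD, hDval]
  have hφint : (∫ t in a..b, φ t)
      = ((b - a) ^ (n + 1) / (2 ^ (n + 1) * ((n + 1).factorial : ℝ))) * (A + B) := by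
    rw [hφ]
    rw [integral_add ((hCcont.intervalIntegrable a b).const_mul _)
      ((hDcont.intervalIntegrable a b).const_mul _)]
    rw [intervalIntegral.integral_const_mul, intervalIntegral.integral_const_mul, hCval, hDval, Nat.factorial_succ]
    have hn1 : ((n : ℝ) + 1) ≠ 0 := by positivity
    push_cast
    rw [div_pow]
    field_simp
  calc |∫ t in a..b, (t - x) ^ n / (n.factorial : ℝ) * iteratedDeriv n f t|
      ≤ ∫ t in a..b, φ t := le_trans step1 step2
    _ = _ := by rw [hφint]
end

section
/- Let f : [a,b] → ℝ be absolutely continuous on [a,b] with derivative f′, and suppose |f′| is convex on [a,b]. Then for all x ∈ [a,b]: | ∫_a^b f(t) dt − { (x−a) f(a) + (b−x) f(b) } | ≤ |f′(a)| [ ((b−x)^3 + (x−a)^2 (3b−2a−x)) / (6(b−a)) ] + |f′(b)| [ ((x−a)^3 + (b−x)^2 (2b+x−3a)) / (6(b−a)) ]. -/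
open MeasureTheory Set

lemma quad_int (p q r c d : ℝ) :
    ∫ t in c..d, (p * t ^ 2 + q * t + r) =
      p * (d ^ 3 - c ^ 3) / 3 + q * (d ^ 2 - c ^ 2) / 2 + r * (d - c) := by
  have h1 : IntervalIntegrable (fun t : ℝ => p * t ^ 2) volume c d :=
    (Continuous.intervalIntegrable (by fun_prop) c d)
  have h2 : IntervalIntegrable (fun t : ℝ => q * t) volume c d :=
    (Continuous.intervalIntegrable (by fun_prop) c d)
  have h3 : IntervalIntegrable (fun _ : ℝ => r) volume c d := intervalIntegrable_const
  rw [intervalIntegral.integral_add (h1.add h2) h3, intervalIntegral.integral_add h1 h2,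
    intervalIntegral.integral_const_mul, intervalIntegral.integral_const_mul,
    integral_pow, integral_id, intervalIntegral.integral_const, smul_eq_mul]
  push_cast
  ring

/-- **Corollary (case `n = 1`).** If `f` is absolutely continuous on `[a, b]` with derivative
`f'` (formalized: `f` has derivative `f' t` at every `t ∈ [a, b]` and `f'` is integrable on
`[a, b]`) and `|f'|` is convex on `[a, b]`, then for all `x ∈ [a, b]`,
`|∫_a^b f - ((x-a) f(a) + (b-x) f(b))|
  ≤ |f'(a)| ((b-x)^3 + (x-a)^2 (3b-2a-x)) / (6(b-a))
    + |f'(b)| ((x-a)^3 + (b-x)^2 (2b+x-3a)) / (6(b-a))`. -/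
theorem abs_integral_sub_trapezoid_le_of_convexOn_abs_deriv
    (f f' : ℝ → ℝ) (a b : ℝ) (hab : a < b)
    (hderiv : ∀ t ∈ Icc a b, HasDerivAt f (f' t) t)
    (hint : IntervalIntegrable f' volume a b)
    (hconv : ConvexOn ℝ (Icc a b) (fun t => |f' t|))
    (x : ℝ) (hx : x ∈ Icc a b) :
    |(∫ t in a..b, f t) - ((x - a) * f a + (b - x) * f b)| ≤
      |f' a| * (((b - x) ^ 3 + (x - a) ^ 2 * (3 * b - 2 * a - x)) / (6 * (b - a))) +
      |f' b| * (((x - a) ^ 3 + (b - x) ^ 2 * (2 * b + x - 3 * a)) / (6 * (b - a))) := by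
  obtain ⟨hax, hxb⟩ := hx
  have hba : (0:ℝ) < b - a := by linarith
  set A := |f' a| with hA
  set B := |f' b| with hB
  have hA0 : 0 ≤ A := abs_nonneg _
  have hB0 : 0 ≤ B := abs_nonneg _
  -- integration by parts
  have hparts : ∫ t in a..b, (t - x) * f' t
      = (b - x) * f b - (a - x) * f a - ∫ t in a..b, f t := by
    have h := intervalIntegral.integral_mul_deriv_eq_deriv_mul
      (u := fun t => t - x) (u' := fun _ => (1:ℝ)) (v := f) (v' := f')
      (fun t _ => (hasDerivAt_id t).sub_const x)
      (fun t ht => hderiv t (by rwa [uIcc_of_le hab.le] at ht))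
      intervalIntegrable_const hint
    simpa using h
  have hkey : (∫ t in a..b, f t) - ((x - a) * f a + (b - x) * f b)
      = -(∫ t in a..b, (t - x) * f' t) := by
    rw [hparts]; ring
  rw [hkey, abs_neg]
  -- the linear majorant of |f'| from convexity
  set w : ℝ → ℝ := fun t => ((b - t) * A + (t - a) * B) / (b - a) with hw
  have hconvb : ∀ t ∈ Icc a b, |f' t| ≤ w t := by
    intro t ht
    obtain ⟨hat, htb⟩ := ht
    have hne : b - a ≠ 0 := hba.ne'
    have h1 : (0:ℝ) ≤ (b - t) / (b - a) := div_nonneg (by linarith) hba.le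
    have h2 : (0:ℝ) ≤ (t - a) / (b - a) := div_nonneg (by linarith) hba.le
    have hsum : (b - t) / (b - a) + (t - a) / (b - a) = 1 := by field_simp; ring
    have h := hconv.2 (left_mem_Icc.2 hab.le) (right_mem_Icc.2 hab.le) h1 h2 hsum
    simp only [smul_eq_mul] at h
    have ht' : (b - t) / (b - a) * a + (t - a) / (b - a) * b = t := by
      field_simp
      ring
    rw [ht'] at h
    calc |f' t| ≤ (b - t) / (b - a) * A + (t - a) / (b - a) * B := h
      _ = w t := by rw [hw]; ring
  -- integrability facts
  have hg : IntervalIntegrable (fun t => (t - x) * f' t) volume a b :=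
    hint.continuousOn_mul (by fun_prop)
  have hφ : ∀ c d : ℝ, IntervalIntegrable (fun t => |t - x| * w t) volume c d :=
    fun c d => Continuous.intervalIntegrable (by fun_prop) c d
  -- bound the integral
  have hbound : |∫ t in a..b, (t - x) * f' t| ≤ ∫ t in a..b, |t - x| * w t := by
    calc |∫ t in a..b, (t - x) * f' t| ≤ ∫ t in a..b, |(t - x) * f' t| :=
          intervalIntegral.abs_integral_le_integral_abs hab.le
      _ ≤ ∫ t in a..b, |t - x| * w t := by
          apply intervalIntegral.integral_mono_on hab.le hg.abs (hφ a b)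
          intro t ht
          rw [abs_mul]
          exact mul_le_mul_of_nonneg_left (hconvb t ht) (abs_nonneg _)
  refine hbound.trans (le_of_eq ?_)
  -- compute the integral by splitting at x
  have hsplit : (∫ t in a..x, |t - x| * w t) + (∫ t in x..b, |t - x| * w t)
      = ∫ t in a..b, |t - x| * w t :=
    intervalIntegral.integral_add_adjacent_intervals (hφ a x) (hφ x b)
  rw [← hsplit]
  have e1 : (∫ t in a..x, |t - x| * w t)
      = ∫ t in a..x, ((A - B) / (b - a) * t ^ 2
          + ((x + a) * B - (x + b) * A) / (b - a) * t + (x * b * A - x * a * B) / (b - a)) := by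
    apply intervalIntegral.integral_congr
    intro t ht
    rw [uIcc_of_le hax] at ht
    show |t - x| * w t = _
    rw [abs_of_nonpos (by linarith [ht.2] : t - x ≤ 0)]
    simp only [hw]
    ring
  have e2 : (∫ t in x..b, |t - x| * w t)
      = ∫ t in x..b, ((B - A) / (b - a) * t ^ 2
          + ((x + b) * A - (x + a) * B) / (b - a) * t + (x * a * B - x * b * A) / (b - a)) := by
    apply intervalIntegral.integral_congr
    intro t ht
    rw [uIcc_of_le hxb] at ht
    show |t - x| * w t = _
    rw [abs_of_nonneg (by linarith [ht.1] : 0 ≤ t - x)]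
    simp only [hw]
    ring
  rw [e1, e2, quad_int, quad_int]
  have hne : b - a ≠ 0 := hba.ne'
  field_simp
  ring
end

section
/- Let f : [a,b] → ℝ be a mapping such that the (n−1)-th derivative f^(n−1) (n ≥ 1) is absolutely continuous on [a,b], let p > 1 and q satisfy 1/p + 1/q = 1, and suppose |f^(n)|^q is convex on [a,b]. Then for all x ∈ [a,b]: | ∫_a^b f(t) dt − Σ_{k=0}^{n−1} (1/(k+1)!) [ (x−a)^{k+1} f^(k)(a) + (−1)^k (b−x)^{k+1} f^(k)(b) ] | ≤ ((b−a)^{1/q} / n!) ( ((x−a)^{np+1} + (b−x)^{np+1}) / (np+1) )^{1/p} ( (|f^(n)(a)|^q + |f^(n)(b)|^q) / 2 )^{1/q}. -/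
open MeasureTheory Set

private lemma aux_identity (f : ℝ → ℝ) (a b x : ℝ) (hab : a ≤ b) :
    ∀ n : ℕ,
      (∀ k < n, ∀ t ∈ Icc a b,
        HasDerivAt (iteratedDeriv k f) (iteratedDeriv (k + 1) f t) t) →
      IntervalIntegrable (iteratedDeriv n f) volume a b →
      (∫ t in a..b, f t) =
        (∑ k ∈ Finset.range n, (1 / (Nat.factorial (k + 1) : ℝ)) *
          ((x - a) ^ (k + 1) * iteratedDeriv k f a +
            (-1 : ℝ) ^ k * (b - x) ^ (k + 1) * iteratedDeriv k f b)) +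
        ∫ t in a..b, (x - t) ^ n / (Nat.factorial n : ℝ) * iteratedDeriv n f t := by
  intro n
  induction n with
  | zero => intro _ _; simp [iteratedDeriv_zero]
  | succ m ih =>
    intro hderiv hint
    have hmlt : m < m + 1 := Nat.lt_succ_self m
    have hm : ∀ k < m, ∀ t ∈ Icc a b,
        HasDerivAt (iteratedDeriv k f) (iteratedDeriv (k + 1) f t) t :=
      fun k hk => hderiv k (hk.trans hmlt)
    have hmc : ContinuousOn (iteratedDeriv m f) (Icc a b) :=
      fun t ht => (hderiv m hmlt t ht).continuousAt.continuousWithinAt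
    have hmint : IntervalIntegrable (iteratedDeriv m f) volume a b :=
      (by rwa [Set.uIcc_of_le hab] :
        ContinuousOn (iteratedDeriv m f) (uIcc a b)).intervalIntegrable
    have hIH := ih hm hmint
    rw [hIH, Finset.sum_range_succ]
    have hm0 : ((Nat.factorial m : ℝ)) ≠ 0 := Nat.cast_ne_zero.2 m.factorial_ne_zero
    have hm1 : ((Nat.factorial (m + 1) : ℝ)) ≠ 0 := Nat.cast_ne_zero.2 (m + 1).factorial_ne_zero
    have hu : ∀ t ∈ uIcc a b,
        HasDerivAt (fun t => -((x - t) ^ (m + 1) / (Nat.factorial (m + 1) : ℝ)))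
          ((x - t) ^ m / (Nat.factorial m : ℝ)) t := by
      intro t _
      have h1 : HasDerivAt (fun t : ℝ => x - t) (-1) t := by
        simpa using (hasDerivAt_id t).const_sub x
      have h3 := ((h1.fun_pow (m + 1)).div_const ((Nat.factorial (m + 1) : ℝ))).fun_neg
      refine h3.congr_deriv ?_
      simp only [Nat.add_sub_cancel]
      rw [Nat.factorial_succ]
      push_cast
      field_simp
    have hv : ∀ t ∈ uIcc a b,
        HasDerivAt (iteratedDeriv m f) (iteratedDeriv (m + 1) f t) t := by
      intro t ht
      exact hderiv m hmlt t (by rwa [Set.uIcc_of_le hab] at ht)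
    have hu' : IntervalIntegrable (fun t => (x - t) ^ m / (Nat.factorial m : ℝ)) volume a b :=
      (((continuous_const.sub continuous_id).pow m).div_const _).intervalIntegrable a b
    have hIBP := intervalIntegral.integral_mul_deriv_eq_deriv_mul hu hv hu' hint
    have hneg : (∫ t in a..b, -((x - t) ^ (m + 1) / (Nat.factorial (m + 1) : ℝ)) *
          iteratedDeriv (m + 1) f t)
        = -∫ t in a..b, (x - t) ^ (m + 1) / (Nat.factorial (m + 1) : ℝ) *
          iteratedDeriv (m + 1) f t := by
      rw [← intervalIntegral.integral_neg]
      congr 1; funext t; ring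
    rw [hneg] at hIBP
    have hB : -((x - b) ^ (m + 1) / (Nat.factorial (m + 1) : ℝ)) * iteratedDeriv m f b -
          -((x - a) ^ (m + 1) / (Nat.factorial (m + 1) : ℝ)) * iteratedDeriv m f a
        = (1 / (Nat.factorial (m + 1) : ℝ)) *
          ((x - a) ^ (m + 1) * iteratedDeriv m f a +
            (-1 : ℝ) ^ m * (b - x) ^ (m + 1) * iteratedDeriv m f b) := by
      have hxb : (x - b) ^ (m + 1) = (-1 : ℝ) ^ (m + 1) * (b - x) ^ (m + 1) := by
        rw [← neg_sub b x, neg_pow]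
      rw [hxb, pow_succ]
      field_simp
      ring
    have hmain : (∫ t in a..b, (x - t) ^ m / (Nat.factorial m : ℝ) * iteratedDeriv m f t)
        = (1 / (Nat.factorial (m + 1) : ℝ)) *
          ((x - a) ^ (m + 1) * iteratedDeriv m f a +
            (-1 : ℝ) ^ m * (b - x) ^ (m + 1) * iteratedDeriv m f b) +
          ∫ t in a..b, (x - t) ^ (m + 1) / (Nat.factorial (m + 1) : ℝ) *
            iteratedDeriv (m + 1) f t := by
      rw [← hB]
      linarith [hIBP]
    rw [hmain]
    ring

private lemma aux_kernel_integral (a b x : ℝ) (hx : x ∈ Icc a b) (n : ℕ) (p : ℝ) (hp : 1 < p) :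
    (∫ t in a..b, ((|x - t| ^ n : ℝ)) ^ p) =
      ((x - a) ^ ((n : ℝ) * p + 1) + (b - x) ^ ((n : ℝ) * p + 1)) / ((n : ℝ) * p + 1) := by
  have hp0 : 0 < p := lt_trans one_pos hp
  have hc0 : (0:ℝ) ≤ (n : ℝ) * p := by positivity
  have hrw : (fun t => ((|x - t| ^ n : ℝ)) ^ p) = fun t => |x - t| ^ ((n : ℝ) * p) := by
    funext t
    rw [← Real.rpow_natCast |x - t| n, ← Real.rpow_mul (abs_nonneg _)]
  rw [hrw]
  have hcont : Continuous (fun t : ℝ => |x - t| ^ ((n : ℝ) * p)) :=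
    ((continuous_const.sub continuous_id).abs).rpow_const (fun t => Or.inr hc0)
  rw [← intervalIntegral.integral_add_adjacent_intervals (a := a) (b := x) (c := b)
    (hcont.intervalIntegrable a x) (hcont.intervalIntegrable x b)]
  have h1 : (∫ t in a..x, |x - t| ^ ((n : ℝ) * p))
      = (x - a) ^ ((n : ℝ) * p + 1) / ((n : ℝ) * p + 1) := by
    have : (∫ t in a..x, |x - t| ^ ((n : ℝ) * p)) = ∫ t in a..x, (x - t) ^ ((n : ℝ) * p) := by
      apply intervalIntegral.integral_congr
      intro t ht
      rw [Set.uIcc_of_le hx.1] at ht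
      show |x - t| ^ ((n : ℝ) * p) = (x - t) ^ ((n : ℝ) * p)
      rw [abs_of_nonneg (by linarith [ht.2])]
    rw [this, intervalIntegral.integral_comp_sub_left (fun s => s ^ ((n : ℝ) * p)) x, sub_self,
      integral_rpow (Or.inl (by linarith))]
    rw [Real.zero_rpow (by linarith)]
    ring
  have h2 : (∫ t in x..b, |x - t| ^ ((n : ℝ) * p))
      = (b - x) ^ ((n : ℝ) * p + 1) / ((n : ℝ) * p + 1) := by
    have : (∫ t in x..b, |x - t| ^ ((n : ℝ) * p)) = ∫ t in x..b, (t - x) ^ ((n : ℝ) * p) := by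
      apply intervalIntegral.integral_congr
      intro t ht
      rw [Set.uIcc_of_le hx.2] at ht
      show |x - t| ^ ((n : ℝ) * p) = (t - x) ^ ((n : ℝ) * p)
      rw [abs_sub_comm, abs_of_nonneg (by linarith [ht.1])]
    rw [this, intervalIntegral.integral_comp_sub_right (fun s => s ^ ((n : ℝ) * p)) x, sub_self,
      integral_rpow (Or.inl (by linarith))]
    rw [Real.zero_rpow (by linarith)]
    ring
  rw [h1, h2]
  ring

private lemma aux_trapezoid (f : ℝ → ℝ) (a b : ℝ) (hab : a < b) (n : ℕ) (q : ℝ) (hq0 : 0 < q)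
    (hint : IntervalIntegrable (iteratedDeriv n f) volume a b)
    (hconv : ConvexOn ℝ (Icc a b) (fun t => |iteratedDeriv n f t| ^ q)) :
    (∫ t in a..b, |iteratedDeriv n f t| ^ q) ≤
      (b - a) * ((|iteratedDeriv n f a| ^ q + |iteratedDeriv n f b| ^ q) / 2) := by
  have hab' : a ≤ b := hab.le
  set Ga := |iteratedDeriv n f a| ^ q with hGa
  set Gb := |iteratedDeriv n f b| ^ q with hGb
  have hba : (0:ℝ) < b - a := by linarith
  have hgM : ∀ t ∈ Icc a b, |iteratedDeriv n f t| ^ q ≤ max Ga Gb := by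
    intro t ht
    exact hconv.le_on_segment (left_mem_Icc.2 hab') (right_mem_Icc.2 hab')
      (by rwa [← segment_eq_Icc hab'] at ht)
  have hgint : IntervalIntegrable (fun t => |iteratedDeriv n f t| ^ q) volume a b := by
    rw [intervalIntegrable_iff_integrableOn_Ioc_of_le hab']
    apply Integrable.mono' (integrable_const (max Ga Gb))
    · exact (Continuous.comp_aestronglyMeasurable
        (continuous_abs.rpow_const (fun y => Or.inr hq0.le)) hint.1.aestronglyMeasurable)
    · filter_upwards [ae_restrict_mem measurableSet_Ioc] with t ht
      rw [Real.norm_eq_abs, abs_of_nonneg (Real.rpow_nonneg (abs_nonneg _) q)]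
      exact hgM t (Ioc_subset_Icc_self ht)
  have hlcont : Continuous (fun t : ℝ => ((b - t) * Ga + (t - a) * Gb) / (b - a)) := by
    continuity
  have hpt : ∀ t ∈ Icc a b,
      |iteratedDeriv n f t| ^ q ≤ ((b - t) * Ga + (t - a) * Gb) / (b - a) := by
    intro t ht
    have hα : (0:ℝ) ≤ (b - t) / (b - a) := by
      apply div_nonneg _ hba.le; linarith [ht.2]
    have hβ : (0:ℝ) ≤ (t - a) / (b - a) := by
      apply div_nonneg _ hba.le; linarith [ht.1]
    have hsum : (b - t) / (b - a) + (t - a) / (b - a) = 1 := by field_simp; ring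
    have := hconv.2 (left_mem_Icc.2 hab') (right_mem_Icc.2 hab') hα hβ hsum
    simp only [smul_eq_mul] at this
    have harg : (b - t) / (b - a) * a + (t - a) / (b - a) * b = t := by field_simp; ring
    rw [harg] at this
    calc |iteratedDeriv n f t| ^ q ≤ (b - t) / (b - a) * Ga + (t - a) / (b - a) * Gb := this
      _ = ((b - t) * Ga + (t - a) * Gb) / (b - a) := by ring
  have hmono := intervalIntegral.integral_mono_on hab' hgint
    (hlcont.intervalIntegrable a b)
    (fun t ht => hpt t ht)
  refine hmono.trans_eq ?_
  have hrw : (fun t : ℝ => ((b - t) * Ga + (t - a) * Gb) / (b - a)) =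
      fun t => (Gb - Ga) / (b - a) * t + (b * Ga - a * Gb) / (b - a) := by
    funext t; field_simp; ring
  rw [hrw]
  rw [intervalIntegral.integral_add
    ((by fun_prop : Continuous fun t : ℝ => (Gb - Ga) / (b - a) * t).intervalIntegrable a b)
    (intervalIntegrable_const), intervalIntegral.integral_const_mul, integral_id,
    intervalIntegral.integral_const]
  rw [smul_eq_mul]
  field_simp [hba.ne']
  ring

private lemma aux_holder (f : ℝ → ℝ) (a b x : ℝ) (hab : a < b) (n : ℕ) (p q : ℝ)
    (hp : 1 < p) (hpq : 1 / p + 1 / q = 1)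
    (hint : IntervalIntegrable (iteratedDeriv n f) volume a b)
    (hconv : ConvexOn ℝ (Icc a b) (fun t => |iteratedDeriv n f t| ^ q))
    (hx : x ∈ Icc a b) :
    (∫ t in a..b, |x - t| ^ n * |iteratedDeriv n f t|) ≤
      (∫ t in a..b, (|x - t| ^ n : ℝ) ^ p) ^ (1 / p) *
      (∫ t in a..b, |iteratedDeriv n f t| ^ q) ^ (1 / q) := by
  have hab' : a ≤ b := hab.le
  have hq : p.HolderConjugate q := Real.holderConjugate_iff.mpr ⟨hp, by simpa [one_div] using hpq⟩
  have hq0 : 0 < q := hq.symm.pos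
  set μ : Measure ℝ := volume.restrict (Set.Ioc a b) with hμdef
  haveI : IsFiniteMeasure μ := ⟨by
    rw [Measure.restrict_apply_univ]; exact measure_Ioc_lt_top⟩
  have hgM : ∀ t ∈ Icc a b, |iteratedDeriv n f t| ^ q ≤
      max (|iteratedDeriv n f a| ^ q) (|iteratedDeriv n f b| ^ q) := by
    intro t ht
    exact hconv.le_on_segment (left_mem_Icc.2 hab') (right_mem_Icc.2 hab')
      (by rwa [← segment_eq_Icc hab'] at ht)
  set M := max (|iteratedDeriv n f a| ^ q) (|iteratedDeriv n f b| ^ q) with hMdef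
  have hM0 : 0 ≤ M := le_max_of_le_left (Real.rpow_nonneg (abs_nonneg _) q)
  have hF2bd : ∀ t ∈ Icc a b, |iteratedDeriv n f t| ≤ M ^ (1 / q) := by
    intro t ht
    have h := Real.rpow_le_rpow (Real.rpow_nonneg (abs_nonneg _) q) (hgM t ht)
      (by positivity : (0:ℝ) ≤ 1 / q)
    rwa [← Real.rpow_mul (abs_nonneg _), mul_one_div_cancel hq0.ne', Real.rpow_one] at h
  have hF1m : MemLp (fun t => (|x - t| ^ n : ℝ)) (ENNReal.ofReal p) μ := by
    apply MemLp.of_bound (((continuous_const.sub continuous_id).abs.pow n).aestronglyMeasurable)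
      ((b - a) ^ n)
    filter_upwards [ae_restrict_mem measurableSet_Ioc] with t ht
    show ‖(|x - id t|) ^ n‖ ≤ (b - a) ^ n
    rw [Real.norm_eq_abs, abs_pow, abs_abs]
    exact pow_le_pow_left₀ (abs_nonneg _)
      (abs_le.2 ⟨by simp only [id_eq]; linarith [hx.1, ht.2],
        by simp only [id_eq]; linarith [hx.2, ht.1]⟩) n
  have hF2sm : AEStronglyMeasurable (fun t => |iteratedDeriv n f t|) μ := by
    exact (Continuous.comp_aestronglyMeasurable continuous_abs hint.1.aestronglyMeasurable)
  have hF2m : MemLp (fun t => |iteratedDeriv n f t|) (ENNReal.ofReal q) μ := by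
    apply MemLp.of_bound hF2sm (M ^ (1 / q))
    filter_upwards [ae_restrict_mem measurableSet_Ioc] with t ht
    rw [Real.norm_eq_abs, abs_abs]
    exact hF2bd t (Ioc_subset_Icc_self ht)
  have hH := MeasureTheory.integral_mul_le_Lp_mul_Lq_of_nonneg hq
    (Filter.Eventually.of_forall fun t => by positivity)
    (Filter.Eventually.of_forall fun t => abs_nonneg _) hF1m hF2m
  rw [intervalIntegral.integral_of_le hab', intervalIntegral.integral_of_le hab',
    intervalIntegral.integral_of_le hab']
  exact hH

/-- **Theorem (Hölder-type estimate).** If `f^(n-1)` (`n ≥ 1`) is absolutely continuous on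
`[a, b]`, `p > 1`, `1/p + 1/q = 1`, and `|f^(n)|^q` is convex on `[a, b]`, then for all
`x ∈ [a, b]`,
`|∫_a^b f - ∑_{k=0}^{n-1} (1/(k+1)!) [(x-a)^{k+1} f^(k)(a) + (-1)^k (b-x)^{k+1} f^(k)(b)]|
  ≤ ((b-a)^{1/q}/n!) (((x-a)^{np+1} + (b-x)^{np+1})/(np+1))^{1/p}
      ((|f^(n)(a)|^q + |f^(n)(b)|^q)/2)^{1/q}`. -/
theorem abs_integral_sub_sum_le_of_convexOn_rpow_abs_iteratedDeriv
    (f : ℝ → ℝ) (a b : ℝ) (hab : a < b) (n : ℕ) (hn : 1 ≤ n)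
    (p q : ℝ) (hp : 1 < p) (hpq : 1 / p + 1 / q = 1)
    (hderiv : ∀ k < n, ∀ t ∈ Icc a b,
      HasDerivAt (iteratedDeriv k f) (iteratedDeriv (k + 1) f t) t)
    (hint : IntervalIntegrable (iteratedDeriv n f) volume a b)
    (hconv : ConvexOn ℝ (Icc a b) (fun t => |iteratedDeriv n f t| ^ q))
    (x : ℝ) (hx : x ∈ Icc a b) :
    |(∫ t in a..b, f t) -
      ∑ k ∈ Finset.range n, (1 / (Nat.factorial (k + 1) : ℝ)) *
        ((x - a) ^ (k + 1) * iteratedDeriv k f a +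
          (-1 : ℝ) ^ k * (b - x) ^ (k + 1) * iteratedDeriv k f b)| ≤
      ((b - a) ^ (1 / q) / (Nat.factorial n : ℝ)) *
        (((x - a) ^ ((n : ℝ) * p + 1) + (b - x) ^ ((n : ℝ) * p + 1)) / ((n : ℝ) * p + 1))
          ^ (1 / p) *
        ((|iteratedDeriv n f a| ^ q + |iteratedDeriv n f b| ^ q) / 2) ^ (1 / q) := by
  have hab' : a ≤ b := hab.le
  have hq : p.HolderConjugate q := Real.holderConjugate_iff.mpr ⟨hp, by simpa [one_div] using hpq⟩
  have hq0 : 0 < q := hq.symm.pos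
  have hn0 : ((Nat.factorial n : ℝ)) ≠ 0 := Nat.cast_ne_zero.2 n.factorial_ne_zero
  have hnpos : (0:ℝ) < (Nat.factorial n : ℝ) := Nat.cast_pos.2 n.factorial_pos
  have hEq : (∫ t in a..b, f t) -
      (∑ k ∈ Finset.range n, (1 / (Nat.factorial (k + 1) : ℝ)) *
        ((x - a) ^ (k + 1) * iteratedDeriv k f a +
          (-1 : ℝ) ^ k * (b - x) ^ (k + 1) * iteratedDeriv k f b)) =
      ∫ t in a..b, (x - t) ^ n / (Nat.factorial n : ℝ) * iteratedDeriv n f t := by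
    rw [aux_identity f a b x hab' n hderiv hint]
    ring
  rw [hEq]
  have h1 : |∫ t in a..b, (x - t) ^ n / (Nat.factorial n : ℝ) * iteratedDeriv n f t|
      ≤ ∫ t in a..b, (Nat.factorial n : ℝ)⁻¹ * (|x - t| ^ n * |iteratedDeriv n f t|) := by
    rw [← Real.norm_eq_abs]
    refine (intervalIntegral.norm_integral_le_integral_norm hab').trans_eq ?_
    apply intervalIntegral.integral_congr
    intro t _
    show ‖(x - t) ^ n / (Nat.factorial n : ℝ) * iteratedDeriv n f t‖ =
      (Nat.factorial n : ℝ)⁻¹ * (|x - t| ^ n * |iteratedDeriv n f t|)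
    rw [Real.norm_eq_abs, abs_mul, abs_div, abs_pow, Nat.abs_cast]
    ring
  rw [intervalIntegral.integral_const_mul] at h1
  have hH := aux_holder f a b x hab n p q hp hpq hint hconv hx
  have hA := aux_kernel_integral a b x hx n p hp
  have hT := aux_trapezoid f a b hab n q hq0 hint hconv
  have hInt2nonneg : (0:ℝ) ≤ ∫ t in a..b, |iteratedDeriv n f t| ^ q :=
    intervalIntegral.integral_nonneg hab' (fun t _ => Real.rpow_nonneg (abs_nonneg _) q)
  have hstep2 : (∫ t in a..b, |iteratedDeriv n f t| ^ q) ^ (1 / q) ≤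
      (b - a) ^ (1 / q) *
        ((|iteratedDeriv n f a| ^ q + |iteratedDeriv n f b| ^ q) / 2) ^ (1 / q) := by
    rw [← Real.mul_rpow (by linarith) (by positivity)]
    exact Real.rpow_le_rpow hInt2nonneg hT (by positivity)
  have hAnonneg : (0:ℝ) ≤ (∫ t in a..b, (|x - t| ^ n : ℝ) ^ p) ^ (1 / p) :=
    Real.rpow_nonneg (intervalIntegral.integral_nonneg hab'
      (fun t _ => Real.rpow_nonneg (by positivity) p)) _
  calc |∫ t in a..b, (x - t) ^ n / (Nat.factorial n : ℝ) * iteratedDeriv n f t|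
      ≤ (Nat.factorial n : ℝ)⁻¹ * ∫ t in a..b, |x - t| ^ n * |iteratedDeriv n f t| := h1
    _ ≤ (Nat.factorial n : ℝ)⁻¹ *
        ((∫ t in a..b, (|x - t| ^ n : ℝ) ^ p) ^ (1 / p) *
          (∫ t in a..b, |iteratedDeriv n f t| ^ q) ^ (1 / q)) := by
        apply mul_le_mul_of_nonneg_left hH (by positivity)
    _ ≤ (Nat.factorial n : ℝ)⁻¹ *
        ((∫ t in a..b, (|x - t| ^ n : ℝ) ^ p) ^ (1 / p) *
          ((b - a) ^ (1 / q) *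
            ((|iteratedDeriv n f a| ^ q + |iteratedDeriv n f b| ^ q) / 2) ^ (1 / q))) := by
        apply mul_le_mul_of_nonneg_left _ (by positivity)
        exact mul_le_mul_of_nonneg_left hstep2 hAnonneg
    _ = ((b - a) ^ (1 / q) / (Nat.factorial n : ℝ)) *
        (((x - a) ^ ((n : ℝ) * p + 1) + (b - x) ^ ((n : ℝ) * p + 1)) / ((n : ℝ) * p + 1))
          ^ (1 / p) *
        ((|iteratedDeriv n f a| ^ q + |iteratedDeriv n f b| ^ q) / 2) ^ (1 / q) := by
        rw [hA]
        ring
end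

section
/- Let f : [a,b] → ℝ be absolutely continuous on [a,b] with derivative f′, let p > 1 and q satisfy 1/p + 1/q = 1, and suppose |f′|^q is convex on [a,b]. Then: | (f(a)+f(b))/2 − (1/(b−a)) ∫_a^b f(t) dt | ≤ (2/(p+1))^{1/p} · ((b−a)/4) · ( |f′(a)|^q + |f′(b)|^q )^{1/q}. -/
open MeasureTheory Set

/-- **Remark (case `n = 1`, `x = (a+b)/2`).** If `f` is absolutely continuous on `[a, b]` with
derivative `f'`, `p > 1`, `1/p + 1/q = 1`, and `|f'|^q` is convex on `[a, b]`, then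
`|(f(a)+f(b))/2 - (1/(b-a)) ∫_a^b f| ≤ (2/(p+1))^{1/p} ((b-a)/4) (|f'(a)|^q + |f'(b)|^q)^{1/q}`. -/
theorem abs_trapezoid_sub_integral_le_of_convexOn_rpow_abs_deriv
    (f f' : ℝ → ℝ) (a b : ℝ) (hab : a < b)
    (p q : ℝ) (hp : 1 < p) (hpq : 1 / p + 1 / q = 1)
    (hderiv : ∀ t ∈ Icc a b, HasDerivAt f (f' t) t)
    (hint : IntervalIntegrable f' volume a b)
    (hconv : ConvexOn ℝ (Icc a b) (fun t => |f' t| ^ q)) :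
    |(f a + f b) / 2 - (1 / (b - a)) * ∫ t in a..b, f t| ≤
      (2 / (p + 1)) ^ (1 / p) * ((b - a) / 4) * (|f' a| ^ q + |f' b| ^ q) ^ (1 / q) := by
  have hba : 0 < b - a := sub_pos.2 hab
  have hp0 : 0 < p := lt_trans one_pos hp
  have hpq' : Real.HolderConjugate p q := Real.holderConjugate_iff.mpr ⟨hp, by simpa [one_div] using hpq⟩
  have hq1 : 1 < q := hpq'.symm.lt
  have hq0 : 0 < q := hpq'.symm.pos
  set m : ℝ := (a + b) / 2 with hm
  have hIcc : uIcc a b = Icc a b := uIcc_of_le hab.le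
  set A : ℝ := |f' a| ^ q with hA'
  set B : ℝ := |f' b| ^ q with hB'
  have hA : 0 ≤ A := Real.rpow_nonneg (abs_nonneg _) q
  have hB : 0 ≤ B := Real.rpow_nonneg (abs_nonneg _) q
  -- Step A: integration by parts
  have hparts : ∫ t in a..b, (t - m) * f' t
      = (b - m) * f b - (a - m) * f a - ∫ t in a..b, (1 : ℝ) * f t := by
    refine intervalIntegral.integral_mul_deriv_eq_deriv_mul
      (u := fun t => t - m) (u' := fun _ => (1 : ℝ))
      (fun x _ => (hasDerivAt_id x).sub_const m)
      (fun x hx => hderiv x (hIcc ▸ hx))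
      intervalIntegrable_const hint
  have hkey : (f a + f b) / 2 - (1 / (b - a)) * ∫ t in a..b, f t
      = (1 / (b - a)) * ∫ t in a..b, (t - m) * f' t := by
    rw [hparts]
    simp only [one_mul, hm]
    field_simp
    ring
  -- Step C: triangle inequality for integrals
  have habs : |∫ t in a..b, (t - m) * f' t| ≤ ∫ t in a..b, |t - m| * |f' t| := by
    refine (intervalIntegral.abs_integral_le_integral_abs hab.le).trans_eq ?_
    simp only [abs_mul]
  -- pointwise convexity bound
  have hptw : ∀ t ∈ Icc a b, |f' t| ^ q ≤ ((b - t) * A + (t - a) * B) / (b - a) := by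
    intro t ht
    have h1 : 0 ≤ (b - t) / (b - a) := div_nonneg (by linarith [ht.2]) hba.le
    have h2 : 0 ≤ (t - a) / (b - a) := div_nonneg (by linarith [ht.1]) hba.le
    have h3 : (b - t) / (b - a) + (t - a) / (b - a) = 1 := by field_simp; ring
    have hcv := hconv.2 (left_mem_Icc.2 hab.le) (right_mem_Icc.2 hab.le) h1 h2 h3
    simp only [smul_eq_mul] at hcv
    have ht' : (b - t) / (b - a) * a + (t - a) / (b - a) * b = t := by
      field_simp; ring
    rw [ht'] at hcv
    calc |f' t| ^ q ≤ (b - t) / (b - a) * A + (t - a) / (b - a) * B := hcv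
      _ = ((b - t) * A + (t - a) * B) / (b - a) := by ring
  have hq_bd : ∀ t ∈ Icc a b, |f' t| ^ q ≤ A + B := by
    intro t ht
    refine (hptw t ht).trans ?_
    rw [div_le_iff₀ hba]
    nlinarith [ht.1, ht.2]
  -- finiteness of the restricted measure
  haveI hfin : IsFiniteMeasure (volume.restrict (Ioc a b)) := by
    constructor
    rw [Measure.restrict_apply_univ]
    simp [Real.volume_Ioc]
  have hf'meas : AEStronglyMeasurable f' (volume.restrict (Ioc a b)) :=
    hint.1.aestronglyMeasurable
  -- Memℒp facts
  have hmem1 : MemLp (fun t => |t - m|) (ENNReal.ofReal p) (volume.restrict (Ioc a b)) := by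
    refine MemLp.of_bound
      ((continuous_abs.comp (continuous_id.sub continuous_const)).aestronglyMeasurable) (b - a) ?_
    refine (ae_restrict_iff' measurableSet_Ioc).2 (Filter.Eventually.of_forall fun t ht => ?_)
    rw [Real.norm_eq_abs, abs_abs, abs_le]
    constructor <;> simp only [hm] <;> [linarith [ht.1]; linarith [ht.2]]
  have hABq : (0:ℝ) ≤ (A + B) ^ (1 / q) := Real.rpow_nonneg (by positivity) _
  have hbd : ∀ t ∈ Icc a b, |f' t| ≤ (A + B) ^ (1 / q) := by
    intro t ht
    have h1 : |f' t| ^ q ≤ A + B := hq_bd t ht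
    have h2 : ((A + B) ^ (1 / q)) ^ q = A + B := by
      rw [← Real.rpow_mul (by positivity), one_div, inv_mul_cancel₀ hq0.ne', Real.rpow_one]
    exact (Real.rpow_le_rpow_iff (abs_nonneg _) hABq hq0).1 (by rw [h2]; exact h1)
  have hmem2 : MemLp (fun t => |f' t|) (ENNReal.ofReal q) (volume.restrict (Ioc a b)) := by
    refine MemLp.of_bound ?_ ((A + B) ^ (1 / q)) ?_
    · simpa [Real.norm_eq_abs] using hf'meas.norm
    · refine (ae_restrict_iff' measurableSet_Ioc).2 (Filter.Eventually.of_forall fun t ht => ?_)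
      rw [Real.norm_eq_abs, abs_abs]
      exact hbd t ⟨ht.1.le, ht.2⟩
  -- Hölder
  have hhold := integral_mul_le_Lp_mul_Lq_of_nonneg hpq'
    (Filter.Eventually.of_forall fun t => abs_nonneg (t - m))
    (Filter.Eventually.of_forall fun t => abs_nonneg (f' t)) hmem1 hmem2
  -- Step E: compute ∫ |t-m|^p
  have hcontp : Continuous fun t : ℝ => |t - m| ^ p :=
    (continuous_abs.comp (continuous_id.sub continuous_const)).rpow_const fun x => Or.inr hp0.le
  have ham : a ≤ m := by simp only [hm]; linarith
  have hmb : m ≤ b := by simp only [hm]; linarith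
  have hma : m - a = (b - a) / 2 := by simp only [hm]; ring
  have hbm : b - m = (b - a) / 2 := by simp only [hm]; ring
  have hE : ∫ t in a..b, |t - m| ^ p = 2 / (p + 1) * ((b - a) / 2) ^ (p + 1) := by
    have hsplit : (∫ t in a..m, |t - m| ^ p) + ∫ t in m..b, |t - m| ^ p
        = ∫ t in a..b, |t - m| ^ p :=
      intervalIntegral.integral_add_adjacent_intervals
        (hcontp.intervalIntegrable _ _) (hcontp.intervalIntegrable _ _)
    have h1 : ∫ t in a..m, |t - m| ^ p = ∫ t in a..m, (m - t) ^ p := by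
      refine intervalIntegral.integral_congr fun t ht => ?_
      rw [uIcc_of_le ham] at ht
      rw [abs_of_nonpos (by linarith [ht.2]), neg_sub]
    have h2 : ∫ t in m..b, |t - m| ^ p = ∫ t in m..b, (t - m) ^ p := by
      refine intervalIntegral.integral_congr fun t ht => ?_
      rw [uIcc_of_le hmb] at ht
      rw [abs_of_nonneg (by linarith [ht.1])]
    have h3 : ∫ t in a..m, (m - t) ^ p = ((b - a) / 2) ^ (p + 1) / (p + 1) := by
      rw [show (fun t => (m - t) ^ p) = (fun t => (fun s => s ^ p) (m - t)) from rfl,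
        intervalIntegral.integral_comp_sub_left (fun s : ℝ => s ^ p) m, sub_self,
        integral_rpow (Or.inl (by linarith)), hma, Real.zero_rpow (by positivity), sub_zero]
    have h4 : ∫ t in m..b, (t - m) ^ p = ((b - a) / 2) ^ (p + 1) / (p + 1) := by
      rw [show (fun t => (t - m) ^ p) = (fun t => (fun s => s ^ p) (t - m)) from rfl,
        intervalIntegral.integral_comp_sub_right (fun s : ℝ => s ^ p) m, sub_self,
        integral_rpow (Or.inl (by linarith)), hbm, Real.zero_rpow (by positivity), sub_zero]
    rw [← hsplit, h1, h2, h3, h4]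
    ring
  -- Step F: bound ∫ |f'|^q
  have hmeasq : AEStronglyMeasurable (fun t => |f' t| ^ q) (volume.restrict (Ioc a b)) :=
    (continuous_abs.rpow_const fun _ => Or.inr hq0.le).comp_aestronglyMeasurable hf'meas
  have hgq : IntervalIntegrable (fun t => |f' t| ^ q) volume a b := by
    rw [intervalIntegrable_iff_integrableOn_Ioc_of_le hab.le]
    refine Integrable.mono' (integrable_const (A + B)) hmeasq ?_
    refine (ae_restrict_iff' measurableSet_Ioc).2 (Filter.Eventually.of_forall fun t ht => ?_)
    rw [Real.norm_eq_abs, abs_of_nonneg (Real.rpow_nonneg (abs_nonneg _) _)]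
    exact hq_bd t ⟨ht.1.le, ht.2⟩
  have hglin : IntervalIntegrable (fun t => ((b - t) * A + (t - a) * B) / (b - a)) volume a b :=
    (Continuous.div_const (((continuous_const.sub continuous_id).mul continuous_const).add
      ((continuous_id.sub continuous_const).mul continuous_const)) _).intervalIntegrable _ _
  have hF : ∫ t in a..b, |f' t| ^ q ≤ (b - a) / 2 * (A + B) := by
    refine (intervalIntegral.integral_mono_on hab.le hgq hglin hptw).trans_eq ?_
    have heq : (fun t => ((b - t) * A + (t - a) * B) / (b - a))
        = fun t => (b * A - a * B) / (b - a) + t * ((B - A) / (b - a)) := by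
      funext t; field_simp; ring
    rw [heq, intervalIntegral.integral_add intervalIntegrable_const
      (IntervalIntegrable.mul_const intervalIntegral.intervalIntegrable_id _),
      intervalIntegral.integral_const, intervalIntegral.integral_mul_const, integral_id, smul_eq_mul]
    field_simp
    ring
  -- combine Hölder with the computations, in interval form
  have hIq0 : 0 ≤ ∫ t in a..b, |f' t| ^ q :=
    intervalIntegral.integral_nonneg hab.le fun u _ => Real.rpow_nonneg (abs_nonneg _) _
  set c : ℝ := (b - a) / 2 with hc
  have hc0 : 0 < c := by positivity
  have hD : ∫ t in a..b, |t - m| * |f' t|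
      ≤ (2 / (p + 1) * c ^ (p + 1)) ^ (1 / p) * ((b - a) / 2 * (A + B)) ^ (1 / q) := by
    rw [intervalIntegral.integral_of_le hab.le]
    refine hhold.trans ?_
    rw [← intervalIntegral.integral_of_le hab.le, ← intervalIntegral.integral_of_le hab.le]
    rw [hE]
    exact mul_le_mul_of_nonneg_left
      (Real.rpow_le_rpow hIq0 hF (by positivity))
      (Real.rpow_nonneg (by positivity) _)
  -- final arithmetic
  have hexp : (p + 1) * (1 / p) + 1 / q = 2 := by
    have h : (p + 1) * (1 / p) = 1 + 1 / p := by field_simp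
    rw [h]; linarith [hpq]
  have hfinal : (1 / (b - a)) * ((2 / (p + 1) * c ^ (p + 1)) ^ (1 / p) * (c * (A + B)) ^ (1 / q))
      = (2 / (p + 1)) ^ (1 / p) * ((b - a) / 4) * (A + B) ^ (1 / q) := by
    rw [Real.mul_rpow (by positivity) (by positivity),
      Real.mul_rpow hc0.le (by positivity),
      ← Real.rpow_mul hc0.le]
    have hcc : c ^ ((p + 1) * (1 / p)) * c ^ (1 / q) = c ^ (2 : ℕ) := by
      rw [← Real.rpow_add hc0, hexp, ← Real.rpow_natCast c 2]
      norm_num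
    calc (1 / (b - a)) * ((2 / (p + 1)) ^ (1 / p) * c ^ ((p + 1) * (1 / p))
            * (c ^ (1 / q) * (A + B) ^ (1 / q)))
        = (2 / (p + 1)) ^ (1 / p) * (A + B) ^ (1 / q)
            * (c ^ ((p + 1) * (1 / p)) * c ^ (1 / q)) * (1 / (b - a)) := by ring
      _ = (2 / (p + 1)) ^ (1 / p) * (A + B) ^ (1 / q) * c ^ (2 : ℕ) * (1 / (b - a)) := by
          rw [hcc]
      _ = (2 / (p + 1)) ^ (1 / p) * ((b - a) / 4) * (A + B) ^ (1 / q) := by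
          simp only [hc]; field_simp; ring
  rw [hkey, abs_mul, abs_of_pos (by positivity : (0:ℝ) < 1 / (b - a))]
  calc (1 / (b - a)) * |∫ t in a..b, (t - m) * f' t|
      ≤ (1 / (b - a)) * ((2 / (p + 1) * c ^ (p + 1)) ^ (1 / p)
          * ((b - a) / 2 * (A + B)) ^ (1 / q)) := by
        refine mul_le_mul_of_nonneg_left (habs.trans hD) (by positivity)
    _ = (2 / (p + 1)) ^ (1 / p) * ((b - a) / 4) * (A + B) ^ (1 / q) := by
        rw [← hc]; exact hfinal
end

section
/- Let f : I° ⊂ ℝ → ℝ be a differentiable mapping on the interior I° of an interval I, and let a, b ∈ I° with a < b. If |f′| is convex on [a,b], then: | (f(a)+f(b))/2 − (1/(b−a)) ∫_a^b f(x) dx | ≤ (b−a)( |f′(a)| + |f′(b)| ) / 8. -/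
open MeasureTheory Set

private lemma quad_integral (p q r u v : ℝ) :
    ∫ x in u..v, (p * x ^ 2 + q * x + r) =
      p * (v ^ 3 - u ^ 3) / 3 + q * (v ^ 2 - u ^ 2) / 2 + r * (v - u) := by
  have h : ∀ x : ℝ, HasDerivAt (fun x => p * x ^ 3 / 3 + (q * x ^ 2 / 2 + r * x))
      (p * x ^ 2 + q * x + r) x := by
    intro x
    have h1 := ((hasDerivAt_pow 3 x).const_mul p).div_const 3
    have h2 := ((hasDerivAt_pow 2 x).const_mul q).div_const 2
    have h3 := (hasDerivAt_id x).const_mul r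
    refine (h1.add (h2.add h3)).congr_deriv ?_
    simp; ring
  rw [intervalIntegral.integral_eq_sub_of_hasDerivAt (fun x _ => h x)
    ((Continuous.intervalIntegrable (by continuity) u v))]
  ring

private lemma aux_calc (a b A B : ℝ) (hab : a < b) :
    ∫ x in a..b, |x - (a + b) / 2| * ((b - x) * A + (x - a) * B) =
      (b - a) ^ 3 * (A + B) / 8 := by
  set m : ℝ := (a + b) / 2 with hm
  have ham : a ≤ m := by rw [hm]; linarith
  have hmb : m ≤ b := by rw [hm]; linarith
  have hi1 : IntervalIntegrable (fun x => |x - m| * ((b - x) * A + (x - a) * B)) volume a m :=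
    Continuous.intervalIntegrable (by continuity) _ _
  have hi2 : IntervalIntegrable (fun x => |x - m| * ((b - x) * A + (x - a) * B)) volume m b :=
    Continuous.intervalIntegrable (by continuity) _ _
  rw [← intervalIntegral.integral_add_adjacent_intervals hi1 hi2]
  have e1 : ∫ x in a..m, |x - m| * ((b - x) * A + (x - a) * B) =
      ∫ x in a..m, ((A - B) * x ^ 2 + (m * (B - A) - A * b + a * B) * x + m * (A * b - a * B)) := by
    apply intervalIntegral.integral_congr
    intro x hx
    rw [uIcc_of_le ham] at hx
    show |x - m| * ((b - x) * A + (x - a) * B) = _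
    rw [abs_of_nonpos (by linarith [hx.2])]
    ring
  have e2 : ∫ x in m..b, |x - m| * ((b - x) * A + (x - a) * B) =
      ∫ x in m..b, ((B - A) * x ^ 2 + (-(m * (B - A) - A * b + a * B)) * x +
        (-(m * (A * b - a * B)))) := by
    apply intervalIntegral.integral_congr
    intro x hx
    rw [uIcc_of_le hmb] at hx
    show |x - m| * ((b - x) * A + (x - a) * B) = _
    rw [abs_of_nonneg (by linarith [hx.1])]
    ring
  rw [e1, e2, quad_integral, quad_integral, hm]
  ring

/-- **Theorem (Dragomir–Agarwal).** Let `f` be differentiable on the interior of an interval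
`I ⊆ ℝ`, and let `a, b ∈ I°` with `a < b`. If `|f'|` is convex on `[a, b]`, then
`|(f(a)+f(b))/2 - (1/(b-a)) ∫_a^b f| ≤ (b-a)(|f'(a)| + |f'(b)|)/8`. -/
theorem abs_trapezoid_sub_integral_le_of_convexOn_abs_deriv
    (I : Set ℝ) (hI : Convex ℝ I) (f : ℝ → ℝ)
    (hf : ∀ t ∈ interior I, DifferentiableAt ℝ f t)
    (a b : ℝ) (ha : a ∈ interior I) (hb : b ∈ interior I) (hab : a < b)
    (hconv : ConvexOn ℝ (Icc a b) (fun t => |deriv f t|)) :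
    |(f a + f b) / 2 - (1 / (b - a)) * ∫ t in a..b, f t| ≤
      (b - a) * (|deriv f a| + |deriv f b|) / 8 := by
  have hba : (0:ℝ) < b - a := sub_pos.2 hab
  set A := |deriv f a| with hA
  set B := |deriv f b| with hB
  have hsub : Icc a b ⊆ interior I := (hI.interior.ordConnected).out ha hb
  have hd : ∀ x ∈ Icc a b, HasDerivAt f (deriv f x) x :=
    fun x hx => (hf x (hsub hx)).hasDerivAt
  -- pointwise convexity bound
  have hptw : ∀ x ∈ Icc a b, |deriv f x| ≤ ((b - x) * A + (x - a) * B) / (b - a) := by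
    intro x hx
    have hα : (0:ℝ) ≤ (b - x) / (b - a) := div_nonneg (by linarith [hx.2]) hba.le
    have hβ : (0:ℝ) ≤ (x - a) / (b - a) := div_nonneg (by linarith [hx.1]) hba.le
    have hαβ : (b - x) / (b - a) + (x - a) / (b - a) = 1 := by field_simp; ring
    have h := hconv.2 (left_mem_Icc.2 hab.le) (right_mem_Icc.2 hab.le) hα hβ hαβ
    have hx' : ((b - x) / (b - a)) • a + ((x - a) / (b - a)) • b = x := by
      simp only [smul_eq_mul]; field_simp; ring
    rw [hx'] at h
    simp only [smul_eq_mul] at h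
    have : (b - x) / (b - a) * A + (x - a) / (b - a) * B =
        ((b - x) * A + (x - a) * B) / (b - a) := by ring
    linarith [h, this.le]
  have hMbound : ∀ x ∈ Icc a b, |deriv f x| ≤ max A B := by
    intro x hx
    refine (hptw x hx).trans ?_
    rw [div_le_iff₀ hba]
    have h1 : A ≤ max A B := le_max_left A B
    have h2 : B ≤ max A B := le_max_right A B
    nlinarith [hx.1, hx.2]
  -- integrability of deriv f
  have hint : IntervalIntegrable (deriv f) volume a b := by
    rw [intervalIntegrable_iff_integrableOn_Icc_of_le hab.le]
    refine Integrable.mono' (g := fun _ => max A B)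
      (integrableOn_const measure_Icc_lt_top.ne)
      ((measurable_deriv f).aestronglyMeasurable.restrict) ?_
    filter_upwards [ae_restrict_mem measurableSet_Icc] with x hx
    simpa [Real.norm_eq_abs] using hMbound x hx
  -- integration by parts
  have key := intervalIntegral.integral_mul_deriv_eq_deriv_mul
    (u := fun x => x - (a + b) / 2) (u' := fun _ => (1:ℝ)) (v := f) (v' := deriv f)
    (fun x _ => (hasDerivAt_id x).sub_const ((a + b) / 2))
    (fun x hx => hd x (by rwa [uIcc_of_le hab.le] at hx))
    intervalIntegrable_const hint
  simp only [one_mul] at key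
  have hrw : (f a + f b) / 2 - (1 / (b - a)) * ∫ t in a..b, f t =
      (1 / (b - a)) * ∫ x in a..b, (x - (a + b) / 2) * deriv f x := by
    rw [key]; field_simp; ring
  rw [hrw, abs_mul, abs_of_pos (by positivity : (0:ℝ) < 1 / (b - a))]
  -- integrability of products
  have hcont : ContinuousOn (fun x : ℝ => |x - (a + b) / 2|) (uIcc a b) :=
    (Continuous.continuousOn (by continuity))
  have hi1 : IntervalIntegrable (fun x => |x - (a + b) / 2| * |deriv f x|) volume a b :=
    hint.abs.continuousOn_mul hcont
  have hi2 : IntervalIntegrable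
      (fun x => |x - (a + b) / 2| * (((b - x) * A + (x - a) * B) / (b - a))) volume a b :=
    Continuous.intervalIntegrable (by continuity) _ _
  have step1 : |∫ x in a..b, (x - (a + b) / 2) * deriv f x| ≤
      ∫ x in a..b, |x - (a + b) / 2| * |deriv f x| := by
    refine (intervalIntegral.abs_integral_le_integral_abs hab.le).trans_eq ?_
    apply intervalIntegral.integral_congr
    intro x _
    exact abs_mul _ _
  have step2 : ∫ x in a..b, |x - (a + b) / 2| * |deriv f x| ≤
      ∫ x in a..b, |x - (a + b) / 2| * (((b - x) * A + (x - a) * B) / (b - a)) := by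
    apply intervalIntegral.integral_mono_on hab.le hi1 hi2
    intro x hx
    exact mul_le_mul_of_nonneg_left (hptw x hx) (abs_nonneg _)
  have step3 : ∫ x in a..b, |x - (a + b) / 2| * (((b - x) * A + (x - a) * B) / (b - a)) =
      (b - a) ^ 2 * (A + B) / 8 := by
    have : (fun x => |x - (a + b) / 2| * (((b - x) * A + (x - a) * B) / (b - a))) =
        fun x => (|x - (a + b) / 2| * ((b - x) * A + (x - a) * B)) / (b - a) := by
      funext x; ring
    rw [this, intervalIntegral.integral_div, aux_calc a b A B hab]
    field_simp
  calc (1 / (b - a)) * |∫ x in a..b, (x - (a + b) / 2) * deriv f x|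
      ≤ (1 / (b - a)) * ((b - a) ^ 2 * (A + B) / 8) := by
        apply mul_le_mul_of_nonneg_left _ (by positivity)
        exact (step1.trans step2).trans_eq step3
    _ = (b - a) * (A + B) / 8 := by field_simp
end

section
/- Let f : I° ⊂ ℝ → ℝ be a differentiable mapping on the interior I° of an interval I, let a, b ∈ I° with a < b, and let p > 1. If |f′|^{p/(p−1)} is convex on [a,b], then: | (f(a)+f(b))/2 − (1/(b−a)) ∫_a^b f(x) dx | ≤ ((b−a) / (2(p+1)^{1/p})) · ( ( |f′(a)|^{p/(p−1)} + |f′(b)|^{p/(p−1)} ) / 2 )^{(p−1)/p}. -/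
open MeasureTheory Set intervalIntegral

/-- **Theorem (Dragomir–Agarwal, Hölder version).** Let `f` be differentiable on the interior
of an interval `I ⊆ ℝ`, let `a, b ∈ I°` with `a < b`, and let `p > 1`. If `|f'|^{p/(p-1)}` is
convex on `[a, b]`, then
`|(f(a)+f(b))/2 - (1/(b-a)) ∫_a^b f|
  ≤ ((b-a)/(2(p+1)^{1/p})) ((|f'(a)|^{p/(p-1)} + |f'(b)|^{p/(p-1)})/2)^{(p-1)/p}`. -/
theorem abs_trapezoid_sub_integral_le_of_convexOn_rpow_abs_deriv'
    (I : Set ℝ) (hI : Convex ℝ I) (f : ℝ → ℝ)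
    (hf : ∀ t ∈ interior I, DifferentiableAt ℝ f t)
    (a b : ℝ) (ha : a ∈ interior I) (hb : b ∈ interior I) (hab : a < b)
    (p : ℝ) (hp : 1 < p)
    (hconv : ConvexOn ℝ (Icc a b) (fun t => |deriv f t| ^ (p / (p - 1)))) :
    |(f a + f b) / 2 - (1 / (b - a)) * ∫ t in a..b, f t| ≤
      ((b - a) / (2 * (p + 1) ^ (1 / p))) *
        ((|deriv f a| ^ (p / (p - 1)) + |deriv f b| ^ (p / (p - 1))) / 2) ^ ((p - 1) / p) := by
  have hp0 : (0:ℝ) < p := by linarith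
  have hp1 : (0:ℝ) < p - 1 := by linarith
  set q : ℝ := p / (p - 1) with hqdef
  have hq0 : 0 < q := by rw [hqdef]; positivity
  have hpq : p.HolderConjugate q := hqdef ▸ Real.HolderConjugate.conjExponent hp
  have hiq : 1 / q = (p - 1) / p := by rw [hqdef]; field_simp
  clear_value q
  set m : ℝ := (a + b) / 2 with hmdef
  set A : ℝ := |deriv f a| ^ q with hA
  set B : ℝ := |deriv f b| ^ q with hB
  have hA0 : 0 ≤ A := Real.rpow_nonneg (abs_nonneg _) _
  have hB0 : 0 ≤ B := Real.rpow_nonneg (abs_nonneg _) _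
  clear_value m A B
  have hba : (0:ℝ) < b - a := by linarith
  have hbane : b - a ≠ 0 := hba.ne'
  have hsub : Icc a b ⊆ interior I := (hI.interior.ordConnected).out ha hb
  have haI : a ∈ Icc a b := left_mem_Icc.2 hab.le
  have hbI : b ∈ Icc a b := right_mem_Icc.2 hab.le
  -- bound on the derivative via convexity
  set C : ℝ := max A B with hCdef
  have hC0 : 0 ≤ C := le_max_of_le_left hA0
  have hC : ∀ x ∈ Icc a b, |deriv f x| ^ q ≤ C := by
    intro x hx
    have hseg : x ∈ segment ℝ a b := by rwa [segment_eq_Icc hab.le]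
    rw [hCdef, hA, hB]
    exact hconv.le_on_segment haI hbI hseg
  set M : ℝ := C ^ (1/q) with hMdef
  have hM0 : 0 ≤ M := Real.rpow_nonneg hC0 _
  have hM : ∀ x ∈ Icc a b, |deriv f x| ≤ M := by
    intro x hx
    have h1 := hC x hx
    have h2 : |deriv f x| = (|deriv f x| ^ q) ^ (1/q) := by
      rw [one_div, Real.rpow_rpow_inv (abs_nonneg _) hq0.ne']
    rw [h2, hMdef]
    exact Real.rpow_le_rpow (Real.rpow_nonneg (abs_nonneg _) _) h1 (by positivity)
  have hmeas : Measurable (deriv f) := measurable_deriv f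
  -- integrability of the derivative
  set μ : Measure ℝ := volume.restrict (Ioc a b) with hμ
  have hboundv : ∀ᵐ x ∂μ, ‖deriv f x‖ ≤ M := by
    rw [hμ, ae_restrict_iff' measurableSet_Ioc]
    exact ae_of_all _ fun x hx => by
      simpa [Real.norm_eq_abs] using hM x (Ioc_subset_Icc_self hx)
  have hmemv : ∀ r : ENNReal, MemLp (deriv f) r μ :=
    fun r => MemLp.of_bound hmeas.aestronglyMeasurable M hboundv
  have hint_deriv : IntervalIntegrable (deriv f) volume a b := by
    rw [intervalIntegrable_iff_integrableOn_Ioc_of_le hab.le]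
    exact (hmemv 1).integrable le_rfl
  -- integration by parts identity
  have hderivAt : ∀ x ∈ uIcc a b, HasDerivAt f (deriv f x) x := by
    intro x hx
    rw [uIcc_of_le hab.le] at hx
    exact (hf x (hsub hx)).hasDerivAt
  have hibp : ∫ x in a..b, (x - m) * deriv f x
      = (b - a) * ((f a + f b) / 2) - ∫ x in a..b, f x := by
    have hu : ∀ x ∈ uIcc a b, HasDerivAt (fun y => y - m) 1 x :=
      fun x _ => (hasDerivAt_id x).sub_const m
    have h := intervalIntegral.integral_mul_deriv_eq_deriv_mul hu hderivAt
      intervalIntegrable_const hint_deriv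
    simp only [one_mul] at h
    rw [h, hmdef]; ring
  have hkey : (f a + f b) / 2 - (1 / (b - a)) * ∫ t in a..b, f t
      = (1 / (b - a)) * ∫ x in a..b, (x - m) * deriv f x := by
    rw [hibp]; field_simp
  -- Hölder's inequality
  have hboundu : ∀ᵐ x ∂μ, ‖x - m‖ ≤ b - a := by
    rw [hμ, ae_restrict_iff' measurableSet_Ioc]
    refine ae_of_all _ fun x hx => ?_
    rw [Real.norm_eq_abs, abs_le]
    exact ⟨by linarith [hx.1, hx.2], by linarith [hx.1, hx.2]⟩
  have hmemu : ∀ r : ENNReal, MemLp (fun x : ℝ => x - m) r μ :=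
    fun r => MemLp.of_bound
      ((continuous_id.sub continuous_const).aestronglyMeasurable) (b - a) hboundu
  have hholder : ∫ x, ‖x - m‖ * ‖deriv f x‖ ∂μ ≤
      (∫ x, ‖x - m‖ ^ p ∂μ) ^ (1/p) * (∫ x, ‖deriv f x‖ ^ q ∂μ) ^ (1/q) :=
    MeasureTheory.integral_mul_norm_le_Lp_mul_Lq hpq (hmemu _) (hmemv _)
  simp only [Real.norm_eq_abs] at hholder
  -- translate the measure integrals to interval integrals
  have hio : ∀ g : ℝ → ℝ, ∫ x in a..b, g x = ∫ x, g x ∂μ := by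
    intro g; rw [intervalIntegral.integral_of_le hab.le, hμ]
  -- value of the p-integral
  have habs_int : ∀ c : ℝ, 0 ≤ c → ∫ x in (0:ℝ)..c, |x| ^ p = c ^ (p+1) / (p+1) := by
    intro c hc
    have h1 : ∫ x in (0:ℝ)..c, |x| ^ p = ∫ x in (0:ℝ)..c, x ^ p := by
      apply intervalIntegral.integral_congr
      intro x hx
      rw [uIcc_of_le hc] at hx
      simp only [abs_of_nonneg hx.1]
    rw [h1, integral_rpow (Or.inl (by linarith))]
    rw [Real.zero_rpow (by positivity)]
    ring
  have hcont : Continuous (fun x : ℝ => |x - m| ^ p) := by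
    apply Continuous.rpow_const (continuous_abs.comp (continuous_id.sub continuous_const))
    exact fun x => Or.inr hp0.le
  have hIp : ∫ x in a..b, |x - m| ^ p = 2 * ((b-a)/2) ^ (p+1) / (p+1) := by
    have hsplit : (∫ x in a..m, |x - m| ^ p) + ∫ x in m..b, |x - m| ^ p
        = ∫ x in a..b, |x - m| ^ p :=
      intervalIntegral.integral_add_adjacent_intervals
        (hcont.intervalIntegrable _ _) (hcont.intervalIntegrable _ _)
    have h2 : ∫ x in m..b, |x - m| ^ p = ((b-a)/2) ^ (p+1) / (p+1) := by
      have : ∫ x in m..b, |x - m| ^ p = ∫ x in m - m..b - m, |x| ^ p :=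
        intervalIntegral.integral_comp_sub_right (fun y => |y| ^ p) m
      rw [this, sub_self, show b - m = (b-a)/2 by rw [hmdef]; ring,
        habs_int _ (by linarith)]
    have h1 : ∫ x in a..m, |x - m| ^ p = ((b-a)/2) ^ (p+1) / (p+1) := by
      have e1 : ∫ x in a..m, |x - m| ^ p = ∫ x in a..m, |m - x| ^ p := by
        apply intervalIntegral.integral_congr
        intro x _
        show |x - m| ^ p = |m - x| ^ p
        rw [abs_sub_comm]
      have e2 : ∫ x in a..m, |m - x| ^ p = ∫ x in m - m..m - a, |x| ^ p :=
        intervalIntegral.integral_comp_sub_left (fun y => |y| ^ p) m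
      rw [e1, e2, sub_self, show m - a = (b-a)/2 by rw [hmdef]; ring,
        habs_int _ (by linarith)]
    rw [← hsplit, h1, h2]; ring
  -- bound on the q-integral via convexity
  have hint_q : IntervalIntegrable (fun x => |deriv f x| ^ q) volume a b := by
    rw [intervalIntegrable_iff_integrableOn_Ioc_of_le hab.le]
    refine MemLp.integrable le_rfl (MemLp.of_bound ?_ C ?_)
    · exact (hmeas.abs.pow_const q).aestronglyMeasurable
    · rw [ae_restrict_iff' measurableSet_Ioc]
      refine ae_of_all _ fun x hx => ?_
      rw [Real.norm_eq_abs, abs_of_nonneg (Real.rpow_nonneg (abs_nonneg _) _)]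
      exact hC x (Ioc_subset_Icc_self hx)
  have hIq : ∫ x in a..b, |deriv f x| ^ q ≤ (b - a) * ((A + B) / 2) := by
    have hmono : ∀ x ∈ Icc a b,
        |deriv f x| ^ q ≤ ((b - x) * A + (x - a) * B) / (b - a) := by
      intro x hx
      have ht0 : (0:ℝ) ≤ (b - x) / (b - a) := by
        apply div_nonneg _ hba.le; linarith [hx.2]
      have hs0 : (0:ℝ) ≤ (x - a) / (b - a) := by
        apply div_nonneg _ hba.le; linarith [hx.1]
      have hts : (b - x) / (b - a) + (x - a) / (b - a) = 1 := by field_simp; ring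
      have hcv := hconv.2 haI hbI ht0 hs0 hts
      simp only [smul_eq_mul] at hcv
      have hxeq : (b - x) / (b - a) * a + (x - a) / (b - a) * b = x := by
        field_simp; ring
      rw [hxeq] at hcv
      rw [← hA, ← hB] at hcv
      calc |deriv f x| ^ q ≤ (b - x) / (b - a) * A + (x - a) / (b - a) * B := hcv
        _ = ((b - x) * A + (x - a) * B) / (b - a) := by ring
    have hintR : IntervalIntegrable
        (fun x => ((b - x) * A + (x - a) * B) / (b - a)) volume a b := by
      apply Continuous.intervalIntegrable; fun_prop
    have h2 := intervalIntegral.integral_mono_on hab.le hint_q hintR hmono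
    have h3 : ∫ x in a..b, ((b - x) * A + (x - a) * B) / (b - a)
        = (b - a) * ((A + B) / 2) := by
      have e : (fun x : ℝ => ((b - x) * A + (x - a) * B) / (b - a))
          = fun x : ℝ => (b * A - a * B) / (b - a) + (B - A) / (b - a) * x := by
        funext x; field_simp; ring
      rw [e]
      rw [intervalIntegral.integral_add intervalIntegrable_const
        ((by fun_prop : Continuous fun x : ℝ => (B - A) / (b - a) * x).intervalIntegrable _ _),
        intervalIntegral.integral_const, intervalIntegral.integral_const_mul,
        _root_.integral_id]
      simp only [smul_eq_mul]
      field_simp; ring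
    linarith [h2, h3.le, h3.ge]
  -- put everything together
  rw [hkey, abs_mul, abs_of_nonneg (by positivity : (0:ℝ) ≤ 1 / (b - a))]
  have step1 : |∫ x in a..b, (x - m) * deriv f x| ≤
      ∫ x in a..b, |x - m| * |deriv f x| := by
    calc |∫ x in a..b, (x - m) * deriv f x|
        ≤ ∫ x in a..b, |(x - m) * deriv f x| :=
          intervalIntegral.abs_integral_le_integral_abs hab.le
      _ = ∫ x in a..b, |x - m| * |deriv f x| := by
          congr 1; funext x; rw [abs_mul]
  have hIq0 : 0 ≤ ∫ x, |deriv f x| ^ q ∂μ := by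
    apply MeasureTheory.integral_nonneg; intro x; positivity
  have step2 : ∫ x in a..b, |x - m| * |deriv f x| ≤
      (2 * ((b-a)/2) ^ (p+1) / (p+1)) ^ (1/p) * ((b - a) * ((A + B) / 2)) ^ (1/q) := by
    rw [hio]
    refine hholder.trans ?_
    have e1 : ∫ x, |x - m| ^ p ∂μ = 2 * ((b-a)/2) ^ (p+1) / (p+1) := by
      rw [← hio, hIp]
    have e2 : (∫ x, |deriv f x| ^ q ∂μ) ≤ (b - a) * ((A + B) / 2) := by
      rw [← hio]; exact hIq
    rw [e1]
    apply mul_le_mul_of_nonneg_left _ (Real.rpow_nonneg (by positivity) _)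
    exact Real.rpow_le_rpow hIq0 e2 (by positivity)
  have hfinal : (1 / (b - a)) *
      ((2 * ((b-a)/2) ^ (p+1) / (p+1)) ^ (1/p) * ((b - a) * ((A + B) / 2)) ^ (1/q))
      = ((b - a) / (2 * (p + 1) ^ (1 / p))) * ((A + B) / 2) ^ (1/q) := by
    set h : ℝ := (b - a) / 2 with hh
    have hhpos : 0 < h := by rw [hh]; positivity
    clear_value h
    have hhne : h ≠ 0 := hhpos.ne'
    have hZ0 : (0:ℝ) ≤ (A + B) / 2 := by positivity
    have hba2 : b - a = 2 * h := by rw [hh]; ring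
    rw [hba2]
    have e1 : (2 * h ^ (p+1) / (p+1)) ^ (1/p)
        = 2 ^ (1/p) * h ^ ((p+1) * (1/p)) / (p+1) ^ (1/p) := by
      rw [Real.div_rpow (by positivity) (by positivity),
        Real.mul_rpow (by norm_num) (by positivity), Real.rpow_mul hhpos.le]
    have e2 : (2 * h * ((A + B) / 2)) ^ (1/q)
        = 2 ^ (1/q) * h ^ (1/q) * ((A + B) / 2) ^ (1/q) := by
      rw [Real.mul_rpow (by positivity) hZ0, Real.mul_rpow (by norm_num) hhpos.le]
    rw [e1, e2]
    have h2 : (2:ℝ) ^ (1/p) * 2 ^ (1/q) = 2 := by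
      rw [← Real.rpow_add two_pos]
      have : 1/p + 1/q = 1 := by
        have := hpq.inv_add_inv_eq_one
        rw [one_div, one_div]; linarith [this]
      rw [this, Real.rpow_one]
    have hhh : h ^ ((p+1) * (1/p)) * h ^ (1/q) = h * h := by
      rw [← Real.rpow_add hhpos]
      have hexp : (p+1) * (1/p) + 1/q = 2 := by
        rw [hiq]; field_simp; ring
      rw [hexp, Real.rpow_two]
      ring
    have hP0 : (0:ℝ) < (p+1) ^ (1/p) := by positivity
    have hPne : (p+1) ^ (1/p) ≠ 0 := hP0.ne'
    calc 1 / (2 * h) * (2 ^ (1/p) * h ^ ((p+1) * (1/p)) / (p+1) ^ (1/p) *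
          (2 ^ (1/q) * h ^ (1/q) * ((A + B) / 2) ^ (1/q)))
        = (2 ^ (1/p) * 2 ^ (1/q)) * (h ^ ((p+1) * (1/p)) * h ^ (1/q)) *
            ((A + B) / 2) ^ (1/q) / (2 * h * (p+1) ^ (1/p)) := by ring
      _ = 2 * (h * h) * ((A + B) / 2) ^ (1/q) / (2 * h * (p+1) ^ (1/p)) := by
          rw [h2, hhh]
      _ = 2 * h / (2 * (p+1) ^ (1/p)) * ((A + B) / 2) ^ (1/q) := by
          field_simp
  calc 1 / (b - a) * |∫ x in a..b, (x - m) * deriv f x|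
      ≤ 1 / (b - a) *
        ((2 * ((b-a)/2) ^ (p+1) / (p+1)) ^ (1/p) * ((b - a) * ((A + B) / 2)) ^ (1/q)) := by
        apply mul_le_mul_of_nonneg_left (step1.trans step2) (by positivity)
    _ = ((b - a) / (2 * (p + 1) ^ (1 / p))) * ((A + B) / 2) ^ ((p - 1) / p) := by
        rw [← hiq]; exact hfinal
end
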